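/- arXiv:chao-dyn/9912016 — 6 statements merged into one kernel-verified Lean document; each statement's English description precedes it below -/
import Mathlib

section
/- For a Levy stable random vector X on R^d with rescaling maps a(n), the maps form a multiplicative semigroup: for all positive integers m, n, a(m·n) = a(m)·a(n). -/
open MeasureTheory MeasurableSpace Set

lemma map_pi_comp {α β : Type*} [MeasurableSpace α] [MeasurableSpace β]
    {ι : Type*} [Fintype ι] (ν : Measure β) [IsProbabilityMeasure ν]
    {T : β → α} (hT : Measurable T) :
    Measure.map (fun g : ι → β => fun i => T (g i)) (Measure.pi fun _ => ν)
      = Measure.pi fun _ : ι => ν.map T := by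
  haveI : IsProbabilityMeasure (ν.map T) := Measure.isProbabilityMeasure_map hT.aemeasurable
  refine (Measure.pi_eq fun s hs => ?_).symm
  have hTg : Measurable (fun g : ι → β => fun i => T (g i)) := by fun_prop
  rw [Measure.map_apply hTg (MeasurableSet.univ_pi hs)]
  have hpre : (fun g : ι → β => fun i => T (g i)) ⁻¹' Set.pi Set.univ s
      = Set.pi Set.univ fun i => T ⁻¹' s i := by
    ext g; simp [Set.mem_pi]
  rw [hpre, Measure.pi_pi]
  exact Finset.prod_congr rfl fun i _ => (Measure.map_apply hT (hs i)).symm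

lemma map_pi_curry {α : Type*} [MeasurableSpace α] {ι κ : Type*} [Fintype ι] [Fintype κ]
    (ν : Measure α) [IsProbabilityMeasure ν] :
    Measure.map (fun f : ι × κ → α => fun i j => f (i, j)) (Measure.pi fun _ => ν)
      = Measure.pi fun _ : ι => Measure.pi fun _ : κ => ν := by
  have hmeas : Measurable (fun f : ι × κ → α => fun i (j : κ) => f (i, j)) := by fun_prop
  refine (Measure.pi_eq_generateFrom
    (C := fun _ => Set.pi Set.univ '' Set.pi Set.univ fun _ : κ => {s : Set α | MeasurableSet s})
    (fun _ => generateFrom_pi) (fun _ => isPiSystem_pi)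
    (fun _ => Measure.FiniteSpanningSetsIn.pi fun _ => ν.toFiniteSpanningSetsIn)
    fun s hs => ?_).symm
  choose t ht hts using hs
  have hmt : ∀ i j, MeasurableSet (t i j) := fun i j => ht i j (Set.mem_univ j)
  have hsmeas : ∀ i, MeasurableSet (s i) := by
    intro i; rw [← hts i]; exact MeasurableSet.univ_pi (hmt i)
  rw [Measure.map_apply hmeas (MeasurableSet.univ_pi hsmeas)]
  have hpre : (fun f : ι × κ → α => fun i (j : κ) => f (i, j)) ⁻¹' Set.pi Set.univ s
      = Set.pi Set.univ fun p : ι × κ => t p.1 p.2 := by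
    ext f
    simp only [Set.mem_preimage, Set.mem_pi, Set.mem_univ, forall_true_left, Prod.forall]
    constructor
    · intro h i j
      have := h i; rw [← hts i] at this
      exact this j (Set.mem_univ j)
    · intro h i
      rw [← hts i]
      intro j _
      exact h i j
  rw [hpre, Measure.pi_pi, Fintype.prod_prod_type]
  refine Finset.prod_congr rfl fun i _ => ?_
  rw [← hts i, Measure.pi_pi]

/-- For a Lévy stable random vector `X` on `ℝ^d` (distribution `μ`) with
rescaling maps `a n` and recentring vectors `γ n` — i.e. the sum of `n` i.i.d. copies of `X`
equals in distribution `a n • X + γ n` — and with affine normalizations uniquely determined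
by `μ`, the rescaling maps form a multiplicative semigroup: `a (m * n) = a m * a n`. -/
theorem levy_stable_rescaling_semigroup {d : ℕ}
    (μ : Measure (EuclideanSpace ℝ (Fin d))) [IsProbabilityMeasure μ]
    (a : ℕ → (EuclideanSpace ℝ (Fin d) →L[ℝ] EuclideanSpace ℝ (Fin d)))
    (γ : ℕ → EuclideanSpace ℝ (Fin d))
    (hstable : ∀ n : ℕ, 1 ≤ n →
      Measure.map (fun f : Fin n → EuclideanSpace ℝ (Fin d) => ∑ i, f i)
          (Measure.pi fun _ => μ)
        = Measure.map (fun x => a n x + γ n) μ)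
    (huniq : ∀ (A B : EuclideanSpace ℝ (Fin d) →L[ℝ] EuclideanSpace ℝ (Fin d))
        (c e : EuclideanSpace ℝ (Fin d)),
      Measure.map (fun x => A x + c) μ = Measure.map (fun x => B x + e) μ → A = B ∧ c = e) :
    ∀ m n : ℕ, 1 ≤ m → 1 ≤ n → a (m * n) = a m * a n := by
  have hmeasS : ∀ k : ℕ, Measurable (fun f : Fin k → EuclideanSpace ℝ (Fin d) => ∑ i, f i) := fun k =>
    Finset.measurable_sum _ fun i _ => measurable_pi_apply i
  have key : ∀ m n : ℕ, 1 ≤ m → 1 ≤ n → a (m * n) = a n * a m := by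
    intro m n hm hn
    have hTn : Measurable (fun x : EuclideanSpace ℝ (Fin d) => a n x + γ n) :=
      ((a n).continuous.add continuous_const).measurable
    -- Step 1 : reindex the (m*n)-fold sum along `finProdFinEquiv`
    have h1 : Measure.map (fun f : Fin (m * n) → EuclideanSpace ℝ (Fin d) => ∑ i, f i) (Measure.pi fun _ => μ)
        = Measure.map (fun f : Fin m × Fin n → EuclideanSpace ℝ (Fin d) => ∑ p, f p) (Measure.pi fun _ => μ) := by
      rw [← (measurePreserving_piCongrLeft (fun _ : Fin (m * n) => μ) finProdFinEquiv).map_eq,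
        Measure.map_map (hmeasS _)
          (MeasurableEquiv.piCongrLeft (fun _ => EuclideanSpace ℝ (Fin d)) finProdFinEquiv).measurable]
      refine congrFun (congrArg Measure.map ?_) _
      funext f
      show ∑ i, (MeasurableEquiv.piCongrLeft (fun _ => EuclideanSpace ℝ (Fin d)) finProdFinEquiv) f i = ∑ p, f p
      rw [← Equiv.sum_comp finProdFinEquiv
        (fun i => (MeasurableEquiv.piCongrLeft (fun _ => EuclideanSpace ℝ (Fin d)) finProdFinEquiv) f i)]
      refine Finset.sum_congr rfl fun p _ => ?_
      simp [MeasurableEquiv.coe_piCongrLeft, Equiv.piCongrLeft_apply_apply]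
    -- Step 2 : curry, turning it into a double sum over an iterated product measure
    have h2 : Measure.map (fun f : Fin m × Fin n → EuclideanSpace ℝ (Fin d) => ∑ p, f p) (Measure.pi fun _ => μ)
        = Measure.map (fun g : Fin m → Fin n → EuclideanSpace ℝ (Fin d) => ∑ i, ∑ j, g i j)
            (Measure.pi fun _ : Fin m => Measure.pi fun _ : Fin n => μ) := by
      have hg2 : Measurable (fun g : Fin m → Fin n → EuclideanSpace ℝ (Fin d) => ∑ i, ∑ j, g i j) := by fun_prop
      have hcur : Measurable (fun f : Fin m × Fin n → EuclideanSpace ℝ (Fin d) => fun i (j : Fin n) => f (i, j)) := by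
        fun_prop
      rw [← map_pi_curry μ, Measure.map_map hg2 hcur]
      refine congrFun (congrArg Measure.map ?_) _
      funext f
      show (∑ p : Fin m × Fin n, f p) = ∑ i : Fin m, ∑ j : Fin n, f (i, j)
      exact Fintype.sum_prod_type (f := fun p : Fin m × Fin n => f p)
    -- Step 3 : evaluate the double sum using stability twice
    have h3 : Measure.map (fun g : Fin m → Fin n → EuclideanSpace ℝ (Fin d) => ∑ i, ∑ j, g i j)
          (Measure.pi fun _ : Fin m => Measure.pi fun _ : Fin n => μ)
        = Measure.map (fun x : EuclideanSpace ℝ (Fin d) => (a n * a m) x + (a n (γ m) + m • γ n)) μ := by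
      have hcomp : (fun g : Fin m → Fin n → EuclideanSpace ℝ (Fin d) => ∑ i, ∑ j, g i j)
          = (fun h : Fin m → EuclideanSpace ℝ (Fin d) => ∑ i, h i) ∘ (fun g (i : Fin m) => ∑ j, g i j) := rfl
      have hrow : Measurable (fun g : Fin m → Fin n → EuclideanSpace ℝ (Fin d) => fun i : Fin m => ∑ j, g i j) := by
        fun_prop
      have hTrow : Measurable (fun g : Fin m → EuclideanSpace ℝ (Fin d) => fun i : Fin m => a n (g i) + γ n) := by
        fun_prop
      rw [hcomp, ← Measure.map_map (hmeasS m) hrow,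
        map_pi_comp _ (hmeasS n), hstable n hn, ← map_pi_comp _ hTn,
        Measure.map_map (hmeasS m) hTrow]
      have hfun : ((fun h : Fin m → EuclideanSpace ℝ (Fin d) => ∑ i, h i) ∘ fun g (i : Fin m) => a n (g i) + γ n)
          = (fun x : EuclideanSpace ℝ (Fin d) => a n x + m • γ n) ∘ (fun h : Fin m → EuclideanSpace ℝ (Fin d) => ∑ i, h i) := by
        funext g
        simp only [Function.comp_apply, Finset.sum_add_distrib, Finset.sum_const,
          Finset.card_univ, Fintype.card_fin, map_sum]
      rw [hfun, ← Measure.map_map (g := fun x : EuclideanSpace ℝ (Fin d) => a n x + m • γ n) ((a n).continuous.add continuous_const).measurable (hmeasS m),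
        hstable m hm, Measure.map_map (g := fun x : EuclideanSpace ℝ (Fin d) => a n x + m • γ n) (f := fun x : EuclideanSpace ℝ (Fin d) => a m x + γ m) ((a n).continuous.add continuous_const).measurable
          ((a m).continuous.add continuous_const).measurable]
      refine congrFun (congrArg Measure.map ?_) _
      funext x
      simp only [Function.comp_apply, ContinuousLinearMap.mul_apply, map_add, add_assoc]
    have := huniq (a (m * n)) (a n * a m) (γ (m * n)) (a n (γ m) + m • γ n)
      (((hstable (m * n) (Nat.mul_pos hm hn)).symm.trans h1).trans (h2.trans h3))
    exact this.1
  intro m n hm hn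
  rw [mul_comm m n]
  exact key n m hn hm
end

section
/- If X is a Levy stable vector with rescaling group a(n) = n^{α⁻¹} (generator α⁻¹) and 1 ∉ Spec(α), then there exists b ∈ R^d such that X − b is strictly stable with the same generator, i.e., sums of n i.i.d. copies of X − b equal in distribution n^{α⁻¹}·(X − b). -/
open MeasureTheory
open NormedSpace (exp)


lemma levyAux_exp_eigen {d : ℕ} (M : Matrix (Fin d) (Fin d) ℂ) {c : ℂ}
    (h : ¬ IsUnit (c • (1 : Matrix (Fin d) (Fin d) ℂ) - exp M)) :
    ∃ (ν : ℂ) (w : Fin d → ℂ), w ≠ 0 ∧ M.mulVec w = ν • w ∧ Complex.exp ν = c := by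
  classical
  letI : SeminormedRing (Matrix (Fin d) (Fin d) ℂ) := Matrix.linftyOpSemiNormedRing
  letI : NormedRing (Matrix (Fin d) (Fin d) ℂ) := Matrix.linftyOpNormedRing
  letI : NormedAlgebra ℂ (Matrix (Fin d) (Fin d) ℂ) := Matrix.linftyOpNormedAlgebra
  -- nonzero vector in kernel
  have hdet : (c • (1 : Matrix (Fin d) (Fin d) ℂ) - exp M).det = 0 := by
    by_contra hd
    exact h ((Matrix.isUnit_iff_isUnit_det _).mpr (isUnit_iff_ne_zero.mpr hd))
  obtain ⟨v, hv0, hv⟩ := (Matrix.exists_mulVec_eq_zero_iff).mpr hdet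
  have hv' : (exp M).mulVec v = c • v := by
    have := hv
    rw [Matrix.sub_mulVec, Matrix.smul_mulVec, Matrix.one_mulVec, sub_eq_zero] at this
    exact this.symm
  -- eigenspace of g := toLin' (exp M) for c
  set g : Module.End ℂ (Fin d → ℂ) := Matrix.toLin' (exp M) with hg
  set f : Module.End ℂ (Fin d → ℂ) := Matrix.toLin' M with hf
  set W : Submodule ℂ (Fin d → ℂ) := Module.End.eigenspace g c with hW
  have hvW : v ∈ W := by
    rw [hW, Module.End.mem_eigenspace_iff, hg, Matrix.toLin'_apply]
    exact hv'
  have hMexp : M * exp M = exp M * M := (Commute.refl M).exp_right.eq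
  have hinv : ∀ x ∈ W, f x ∈ W := by
    intro x hx
    rw [hW, Module.End.mem_eigenspace_iff] at hx ⊢
    have : g (f x) = f (g x) := by
      rw [hg, hf]
      simp only [Matrix.toLin'_apply, Matrix.mulVec_mulVec]
      rw [hMexp]
    rw [this, hx, _root_.map_smul]
  haveI : Nontrivial W := nontrivial_of_ne ⟨v, hvW⟩ 0 (by simpa using hv0)
  obtain ⟨ν, hν⟩ := Module.End.exists_eigenvalue (f.restrict hinv)
  obtain ⟨w', hw'⟩ := hν.exists_hasEigenvector
  refine ⟨ν, (w' : Fin d → ℂ), by simpa [Submodule.coe_eq_zero] using hw'.right, ?_, ?_⟩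
  · have := hw'.apply_eq_smul
    have h2 : f (w' : Fin d → ℂ) = ν • (w' : Fin d → ℂ) := by
      have := congrArg (Subtype.val) this
      simpa using this
    rwa [hf, Matrix.toLin'_apply] at h2
  · -- exp M *ᵥ w = exp ν • w, and also = c • w
    have hMw : M.mulVec (w' : Fin d → ℂ) = ν • (w' : Fin d → ℂ) := by
      have h2 := congrArg (Subtype.val) hw'.apply_eq_smul
      have h3 : f (w' : Fin d → ℂ) = ν • (w' : Fin d → ℂ) := by simpa using h2
      rwa [hf, Matrix.toLin'_apply] at h3
    have hc : (exp M).mulVec (w' : Fin d → ℂ) = c • (w' : Fin d → ℂ) := by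
      have h4 : (w' : Fin d → ℂ) ∈ Module.End.eigenspace g c := w'.2
      rw [Module.End.mem_eigenspace_iff, hg, Matrix.toLin'_apply] at h4
      exact h4
    have hw0 : (w' : Fin d → ℂ) ≠ 0 := by simpa [Submodule.coe_eq_zero] using hw'.right
    set w : Fin d → ℂ := (w' : Fin d → ℂ)
    have hpow : ∀ k : ℕ, (M ^ k).mulVec w = ν ^ k • w := by
      intro k
      induction k with
      | zero => simp [Matrix.one_mulVec]
      | succ k ih =>
        rw [pow_succ, ← Matrix.mulVec_mulVec, hMw, Matrix.mulVec_smul, ih, smul_smul, ← pow_succ']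
    let L : Matrix (Fin d) (Fin d) ℂ →ₗ[ℂ] (Fin d → ℂ) :=
      { toFun := fun N => N.mulVec w
        map_add' := fun A B => Matrix.add_mulVec A B w
        map_smul' := fun a A => Matrix.smul_mulVec a A w }
    have hL : Continuous L := L.continuous_of_finiteDimensional
    have hsum : Summable fun k : ℕ => ((k.factorial : ℂ))⁻¹ • M ^ k := NormedSpace.expSeries_summable' M
    have h1 : HasSum (fun k : ℕ => L (((k.factorial : ℂ))⁻¹ • M ^ k)) (L (exp M)) := by
      have h2 := hsum.hasSum.map L hL
      have h3 : L (exp M) = L (∑' k : ℕ, ((k.factorial : ℂ))⁻¹ • M ^ k) := by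
        rw [NormedSpace.exp_eq_tsum ℂ]
      rw [h3]
      exact h2
    have h4 : HasSum (fun k : ℕ => (((k.factorial : ℂ))⁻¹ * ν ^ k) • w) ((exp M).mulVec w) := by
      convert h1 using 2 with k
      simp only [L, _root_.map_smul, LinearMap.coe_mk, AddHom.coe_mk, RingHom.id_apply]
      rw [hpow k, smul_smul]
      rfl
    have h5 : HasSum (fun k : ℕ => ((k.factorial : ℂ))⁻¹ * ν ^ k) (Complex.exp ν) := by
      have hs := (NormedSpace.expSeries_summable' (𝕂 := ℂ) (𝔸 := ℂ) ν).hasSum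
      have he : Complex.exp ν = ∑' k : ℕ, ((k.factorial : ℂ))⁻¹ • ν ^ k := by
        rw [Complex.exp_eq_exp_ℂ, NormedSpace.exp_eq_tsum ℂ]
      rw [he]
      simpa [smul_eq_mul] using hs
    have h6 := h5.smul_const w
    have h7 : (exp M).mulVec w = Complex.exp ν • w := h4.unique h6
    rw [hc] at h7
    have := sub_eq_zero.mpr h7
    rw [← sub_smul] at this
    rcases smul_eq_zero.mp this with h | h
    · exact (sub_eq_zero.mp h).symm
    · exact absurd h hw0


lemma levyAux_pos_case {p q : ℕ} (hp : p.Prime) (hq : q.Prime) {a b : ℕ}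
    (ha : 0 < a) (h : (a : ℝ) * Real.log q = (b : ℝ) * Real.log p) : p = q := by
  have hq1 : (1 : ℝ) < q := by exact_mod_cast hq.one_lt
  have hp1 : (1 : ℝ) < p := by exact_mod_cast hp.one_lt
  have h1 : Real.log ((q : ℝ) ^ a) = Real.log ((p : ℝ) ^ b) := by
    rw [Real.log_pow, Real.log_pow]; exact_mod_cast h
  have h2 : ((q : ℝ) ^ a) = ((p : ℝ) ^ b) := by
    have hqa : (0 : ℝ) < (q : ℝ) ^ a := by positivity
    have hpb : (0 : ℝ) < (p : ℝ) ^ b := by positivity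
    calc ((q:ℝ)^a) = Real.exp (Real.log ((q:ℝ)^a)) := (Real.exp_log hqa).symm
    _ = Real.exp (Real.log ((p:ℝ)^b)) := by rw [h1]
    _ = (p:ℝ)^b := Real.exp_log hpb
  have h3 : q ^ a = p ^ b := by exact_mod_cast h2
  have hb : 0 < b := by
    rcases Nat.eq_zero_or_pos b with hb | hb
    · exfalso
      rw [hb, pow_zero] at h3
      have h5 : 1 < q ^ a := Nat.one_lt_pow ha.ne' hq.one_lt
      omega
    · exact hb
  have hdvd : p ∣ q ^ a := by rw [h3]; exact dvd_pow_self p hb.ne'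
  exact (Nat.prime_dvd_prime_iff_eq hp hq).mp (hp.dvd_of_dvd_pow hdvd)

lemma levyAux_log_ne {p q : ℕ} (hp : p.Prime) (hq : q.Prime) (hne : p ≠ q) {k l : ℤ}
    (hk : k ≠ 0) (h : (k : ℝ) * Real.log q = (l : ℝ) * Real.log p) : False := by
  have hlq : 0 < Real.log q := Real.log_pos (by exact_mod_cast hq.one_lt)
  have hlp : 0 < Real.log p := Real.log_pos (by exact_mod_cast hp.one_lt)
  rcases lt_or_gt_of_ne hk with hk0 | hk0
  · -- k < 0; then l < 0
    have hl0 : (l : ℝ) < 0 := by nlinarith [show (k:ℝ) < 0 by exact_mod_cast hk0]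
    have hl0' : l < 0 := by exact_mod_cast hl0
    have ha : 0 < (-k).toNat := by omega
    have h' : (((-k).toNat : ℝ)) * Real.log q = (((-l).toNat : ℝ)) * Real.log p := by
      have e1 : (((-k).toNat : ℝ)) = -(k : ℝ) := by
        have : ((-k).toNat : ℤ) = -k := Int.toNat_of_nonneg (by omega)
        exact_mod_cast congrArg (Int.cast : ℤ → ℝ) this
      have e2 : (((-l).toNat : ℝ)) = -(l : ℝ) := by
        have : ((-l).toNat : ℤ) = -l := Int.toNat_of_nonneg (by omega)
        exact_mod_cast congrArg (Int.cast : ℤ → ℝ) this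
      rw [e1, e2]; nlinarith [h]
    exact hne (levyAux_pos_case hp hq ha h')
  · have hl0 : 0 < (l : ℝ) := by nlinarith [show (0:ℝ) < k by exact_mod_cast hk0]
    have hl0' : 0 < l := by exact_mod_cast hl0
    have ha : 0 < k.toNat := by omega
    have h' : ((k.toNat : ℝ)) * Real.log q = ((l.toNat : ℝ)) * Real.log p := by
      have e1 : ((k.toNat : ℝ)) = (k : ℝ) := by
        have : (k.toNat : ℤ) = k := Int.toNat_of_nonneg (by omega)
        exact_mod_cast congrArg (Int.cast : ℤ → ℝ) this
      have e2 : ((l.toNat : ℝ)) = (l : ℝ) := by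
        have : (l.toNat : ℤ) = l := Int.toNat_of_nonneg (by omega)
        exact_mod_cast congrArg (Int.cast : ℤ → ℝ) this
      rw [e1, e2]; exact h
    exact hne (levyAux_pos_case hp hq ha h')


lemma levyAux_map_exp (N : Matrix (Fin d) (Fin d) ℝ) :
    (exp N).map (algebraMap ℝ ℂ) = exp (N.map (algebraMap ℝ ℂ)) := by
  letI : SeminormedRing (Matrix (Fin d) (Fin d) ℝ) := Matrix.linftyOpSemiNormedRing
  letI : NormedRing (Matrix (Fin d) (Fin d) ℝ) := Matrix.linftyOpNormedRing
  letI : NormedAlgebra ℝ (Matrix (Fin d) (Fin d) ℝ) := Matrix.linftyOpNormedAlgebra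
  letI : SeminormedRing (Matrix (Fin d) (Fin d) ℂ) := Matrix.linftyOpSemiNormedRing
  letI : NormedRing (Matrix (Fin d) (Fin d) ℂ) := Matrix.linftyOpNormedRing
  letI : NormedAlgebra ℝ (Matrix (Fin d) (Fin d) ℂ) := Matrix.linftyOpNormedAlgebra
  letI : NormedAlgebra ℂ (Matrix (Fin d) (Fin d) ℂ) := Matrix.linftyOpNormedAlgebra
  have hΦ : Continuous ((algebraMap ℝ ℂ).mapMatrix :
      Matrix (Fin d) (Fin d) ℝ →+* Matrix (Fin d) (Fin d) ℂ) := by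
    exact Continuous.matrix_map continuous_id Complex.continuous_ofReal
  letI : NormedAlgebra ℚ (Matrix (Fin d) (Fin d) ℝ) := NormedAlgebra.restrictScalars ℚ ℝ _
  have h := NormedSpace.map_exp ((algebraMap ℝ ℂ).mapMatrix :
      Matrix (Fin d) (Fin d) ℝ →+* Matrix (Fin d) (Fin d) ℂ) hΦ N
  simp only [RingHom.mapMatrix_apply] at h
  exact h

lemma levyAux_exists_good (α : Matrix (Fin d) (Fin d) ℝ) (hα : IsUnit α)
    (hspec : (1 : ℂ) ∉ spectrum ℂ (α.map (algebraMap ℝ ℂ))) :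
    ∃ n : ℕ, 2 ≤ n ∧
      IsUnit ((n : ℝ) • (1 : Matrix (Fin d) (Fin d) ℝ) - exp (Real.log n • α⁻¹)) := by
  classical
  by_contra hcon
  push_neg at hcon
  set β : Matrix (Fin d) (Fin d) ℂ := (α⁻¹).map (algebraMap ℝ ℂ) with hβ
  set αc : Matrix (Fin d) (Fin d) ℂ := α.map (algebraMap ℝ ℂ) with hαc
  have hαβ : αc * β = 1 := by
    rw [hαc, hβ, ← RingHom.mapMatrix_apply, ← RingHom.mapMatrix_apply, ← map_mul,
      Matrix.mul_nonsing_inv α ((Matrix.isUnit_iff_isUnit_det α).mp hα), map_one]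
  -- for every prime p we get an eigen-pair
  have key : ∀ p : ℕ, p.Prime →
      ∃ (ν : ℂ) (w : Fin d → ℂ) (k : ℤ), w ≠ 0 ∧ β.mulVec w = ν • w ∧ k ≠ 0 ∧
        ν = 1 + (k * (2 * (Real.pi : ℂ) * Complex.I)) / (Real.log p : ℂ) := by
    intro p hp
    have hp2 : 2 ≤ p := hp.two_le
    have hbad := hcon p hp2
    have hlogp : Real.log p ≠ 0 :=
      (Real.log_pos (by exact_mod_cast hp.one_lt)).ne'
    have hlogpC : (Real.log p : ℂ) ≠ 0 := by exact_mod_cast hlogp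
    -- complexify
    have hmap : (((p : ℝ) • (1 : Matrix (Fin d) (Fin d) ℝ)
          - exp (Real.log p • α⁻¹)).map (algebraMap ℝ ℂ))
        = (p : ℂ) • (1 : Matrix (Fin d) (Fin d) ℂ) - exp ((Real.log p : ℂ) • β) := by
      have h1 : ((Real.log p • α⁻¹ : Matrix (Fin d) (Fin d) ℝ).map (algebraMap ℝ ℂ))
          = (Real.log p : ℂ) • β := by
        ext i j
        simp [Matrix.map_apply, hβ]
      rw [← RingHom.mapMatrix_apply, map_sub, RingHom.mapMatrix_apply,
        RingHom.mapMatrix_apply, levyAux_map_exp, h1]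
      congr 1
      ext i j
      by_cases h : i = j <;> simp [Matrix.map_apply, Matrix.one_apply, h]
    have hbadC : ¬ IsUnit ((p : ℂ) • (1 : Matrix (Fin d) (Fin d) ℂ)
        - exp ((Real.log p : ℂ) • β)) := by
      rw [← hmap]
      intro hU
      apply hbad
      rw [Matrix.isUnit_iff_isUnit_det] at hU ⊢
      have hd := (RingHom.map_det (algebraMap ℝ ℂ) ((p : ℝ) • (1 : Matrix (Fin d) (Fin d) ℝ)
          - exp (Real.log p • α⁻¹))).symm
      rw [RingHom.mapMatrix_apply] at hd
      rw [hd] at hU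
      rcases eq_or_ne (((p : ℝ) • (1 : Matrix (Fin d) (Fin d) ℝ)
          - exp (Real.log p • α⁻¹)).det) 0 with h0 | h0
      · rw [h0] at hU; simp at hU
      · exact isUnit_iff_ne_zero.mpr h0
    obtain ⟨ν', w, hw0, hvw, hexp⟩ := levyAux_exp_eigen _ hbadC
    rw [Matrix.smul_mulVec] at hvw
    set ν : ℂ := ν' / (Real.log p : ℂ) with hν
    have hβw : β.mulVec w = ν • w := by
      have := congrArg (fun z => ((Real.log p : ℂ))⁻¹ • z) hvw
      simp only [smul_smul] at this
      rw [inv_mul_cancel₀ hlogpC, one_smul] at this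
      rw [this, hν, div_eq_inv_mul]
    have hexp' : Complex.exp (ν * (Real.log p : ℂ)) = (p : ℂ) := by
      rw [hν, div_mul_cancel₀ _ hlogpC]; exact hexp
    -- ν ≠ 1
    have hν1 : ν ≠ 1 := by
      intro h1
      rw [h1, one_smul] at hβw
      have hw : αc.mulVec w = w := by
        conv_rhs => rw [← Matrix.one_mulVec w, ← hαβ]
        rw [← Matrix.mulVec_mulVec, hβw]
      apply hspec
      rw [spectrum.mem_iff]
      intro hU
      rw [map_one] at hU
      have hdet : IsUnit (1 - αc).det := (Matrix.isUnit_iff_isUnit_det _).mp hU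
      have hzero : (1 - αc).mulVec w = 0 := by
        rw [Matrix.sub_mulVec, Matrix.one_mulVec, hw, sub_self]
      apply hw0
      calc w = ((1 - αc)⁻¹ * (1 - αc)).mulVec w := by
            rw [Matrix.nonsing_inv_mul _ hdet, Matrix.one_mulVec]
      _ = (1 - αc)⁻¹.mulVec ((1 - αc).mulVec w) := by rw [Matrix.mulVec_mulVec]
      _ = 0 := by rw [hzero, Matrix.mulVec_zero]
    -- extract k
    have hexplog : Complex.exp (ν * (Real.log p : ℂ)) = Complex.exp ((Real.log p : ℂ)) := by
      rw [hexp', ← Complex.ofReal_exp, Real.exp_log (by exact_mod_cast hp.pos)]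
      norm_cast
    obtain ⟨k, hk⟩ := Complex.exp_eq_exp_iff_exists_int.mp hexplog
    refine ⟨ν, w, k, hw0, hβw, ?_, ?_⟩
    · intro h0
      rw [h0] at hk
      simp only [Int.cast_zero, zero_mul, add_zero] at hk
      exact hν1 (mul_right_cancel₀ hlogpC (by rw [hk, one_mul]))
    · have : ν = (((Real.log p : ℂ)) + k * (2 * (Real.pi : ℂ) * Complex.I))
          / (Real.log p : ℂ) := by
        rw [eq_div_iff hlogpC]; exact hk
      rw [this, add_div, div_self hlogpC]
  -- now pick d+1 primes
  set pr : Fin (d + 1) → ℕ := fun i => Nat.nth Nat.Prime i with hpr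
  have hprP : ∀ i, (pr i).Prime := fun i => Nat.nth_mem_of_infinite Nat.infinite_setOf_prime i
  have hprInj : Function.Injective pr :=
    fun i j h => Fin.ext (by
      have := (Nat.nth_injective Nat.infinite_setOf_prime) h
      exact_mod_cast this)
  choose ν w k hw0 hβw hk0 hνeq using fun i => key (pr i) (hprP i)
  have hνinj : Function.Injective ν := by
    intro i j hij
    by_contra hne
    have hpne : pr i ≠ pr j := fun h => hne (hprInj h)
    have h1 := hνeq i
    have h2 := hνeq j
    rw [hij] at h1
    rw [h1] at h2
    have hli' : Real.log ((pr i : ℕ) : ℝ) ≠ 0 := by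
      have h1lt : (1 : ℝ) < ((pr i : ℕ) : ℝ) := by exact_mod_cast (hprP i).one_lt
      exact (Real.log_pos h1lt).ne'
    have hlj' : Real.log ((pr j : ℕ) : ℝ) ≠ 0 := by
      have h1lt : (1 : ℝ) < ((pr j : ℕ) : ℝ) := by exact_mod_cast (hprP j).one_lt
      exact (Real.log_pos h1lt).ne'
    have hli : ((Real.log ((pr i : ℕ) : ℝ)) : ℂ) ≠ 0 := by exact_mod_cast hli'
    have hlj : ((Real.log ((pr j : ℕ) : ℝ)) : ℂ) ≠ 0 := by exact_mod_cast hlj'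
    have e0 : (k i : ℂ) * (2 * (Real.pi : ℂ) * Complex.I) / (Real.log (pr i) : ℂ)
        = (k j : ℂ) * (2 * (Real.pi : ℂ) * Complex.I) / (Real.log (pr j) : ℂ) :=
      add_left_cancel h2
    rw [div_eq_div_iff hli hlj] at e0
    have e1 : ((k i : ℂ) * (Real.log (pr j) : ℂ)) * (2 * (Real.pi : ℂ) * Complex.I)
        = ((k j : ℂ) * (Real.log (pr i) : ℂ)) * (2 * (Real.pi : ℂ) * Complex.I) := by
      linear_combination e0
    have h4 := mul_right_cancel₀ Complex.two_pi_I_ne_zero e1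
    have h5 : (k i : ℝ) * Real.log (pr j) = (k j : ℝ) * Real.log (pr i) := by
      exact_mod_cast h4
    exact levyAux_log_ne (hprP i) (hprP j) hpne (hk0 i) h5
  -- eigenvectors are linearly independent
  have hev : ∀ i, Module.End.HasEigenvector
      (Matrix.toLin' β : Module.End ℂ (Fin d → ℂ)) (ν i) (w i) := by
    intro i
    refine ⟨?_, hw0 i⟩
    rw [Module.End.mem_eigenspace_iff, Matrix.toLin'_apply]
    exact hβw i
  have hli := Module.End.eigenvectors_linearIndependent' (Matrix.toLin' β) ν hνinj w hev
  have hcard := hli.fintype_card_le_finrank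
  rw [Fintype.card_fin, Module.finrank_pi, Fintype.card_fin] at hcard
  omega


/-- If `X` (with distribution `μ`) is a Lévy stable vector whose rescaling
group is `a n = n^{α⁻¹} = exp((log n) • α⁻¹)` for an invertible linear map `α` with
`1 ∉ Spec(α)` (complex eigenvalues), and the recentring vectors satisfy the consistency
relation `γ (m*n) = a n (γ m) + m • γ n`, then there exists `b` such that `X - b` is strictly
stable with the same generator: sums of `n` i.i.d. copies of `X - b` equal in distribution
`n^{α⁻¹} (X - b)`. -/
theorem levy_stable_reduction_to_strict {d : ℕ}
    (μ : Measure (Fin d → ℝ)) [IsProbabilityMeasure μ]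
    (α : Matrix (Fin d) (Fin d) ℝ) (hα : IsUnit α)
    (γ : ℕ → Fin d → ℝ)
    (hstable : ∀ n : ℕ, 1 ≤ n →
      Measure.map (fun f : Fin n → Fin d → ℝ => ∑ i, f i) (Measure.pi fun _ => μ)
        = Measure.map
            (fun x => (NormedSpace.exp (Real.log n • α⁻¹)).mulVec x + γ n) μ)
    (hγ : ∀ m n : ℕ, 1 ≤ m → 1 ≤ n →
      γ (m * n) = (NormedSpace.exp (Real.log n • α⁻¹)).mulVec (γ m) + (m : ℝ) • γ n)
    (hspec : (1 : ℂ) ∉ spectrum ℂ (α.map (algebraMap ℝ ℂ))) :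
    ∃ b : Fin d → ℝ, ∀ n : ℕ, 1 ≤ n →
      Measure.map (fun f : Fin n → Fin d → ℝ => ∑ i, f i)
          (Measure.pi fun _ => Measure.map (fun x => x - b) μ)
        = Measure.map (fun x => (NormedSpace.exp (Real.log n • α⁻¹)).mulVec x)
            (Measure.map (fun x => x - b) μ) := by
  classical
  set A : ℕ → Matrix (Fin d) (Fin d) ℝ := fun n => exp (Real.log n • α⁻¹) with hA
  set C : ℕ → Matrix (Fin d) (Fin d) ℝ := fun n => (n : ℝ) • 1 - A n with hC
  have hCe : ∀ (k : ℕ) (v : Fin d → ℝ),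
      (C k).mulVec v = (k : ℝ) • v - (A k).mulVec v := by
    intro k v
    simp only [hC, Matrix.sub_mulVec, Matrix.smul_mulVec, Matrix.one_mulVec]
  have hcomm : ∀ m n : ℕ, Commute (A m) (A n) := by
    intro m n
    letI : SeminormedRing (Matrix (Fin d) (Fin d) ℝ) := Matrix.linftyOpSemiNormedRing
    letI : NormedRing (Matrix (Fin d) (Fin d) ℝ) := Matrix.linftyOpNormedRing
    letI : NormedAlgebra ℝ (Matrix (Fin d) (Fin d) ℝ) := Matrix.linftyOpNormedAlgebra
    exact (((Commute.refl α⁻¹).smul_left (Real.log m)).smul_right (Real.log n)).exp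
  have hCcomm : ∀ m n : ℕ, Commute (C m) (C n) := by
    intro m n
    have h1 : Commute ((m : ℝ) • (1 : Matrix (Fin d) (Fin d) ℝ)) (C n) :=
      (Commute.one_left (C n)).smul_left _
    have h3 : Commute (A m) ((n : ℝ) • (1 : Matrix (Fin d) (Fin d) ℝ)) :=
      (Commute.one_right (A m)).smul_right _
    exact h1.sub_left (h3.sub_right (hcomm m n))
  have hrel : ∀ m n : ℕ, 1 ≤ m → 1 ≤ n →
      (C m).mulVec (γ n) = (C n).mulVec (γ m) := by
    intro m n hm hn
    have h1 := hγ m n hm hn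
    have h2 := hγ n m hn hm
    rw [mul_comm n m] at h2
    have h3 : (A n).mulVec (γ m) + (m : ℝ) • γ n
        = (A m).mulVec (γ n) + (n : ℝ) • γ m := by rw [← h1, ← h2]
    rw [hCe, hCe, sub_eq_sub_iff_add_eq_add,
      add_comm ((m : ℝ) • γ n) ((A n).mulVec (γ m)),
      add_comm ((n : ℝ) • γ m) ((A m).mulVec (γ n))]
    exact h3
  obtain ⟨n₀, hn₀2, hunit⟩ := levyAux_exists_good α hα hspec
  have hdet : IsUnit (C n₀).det := (Matrix.isUnit_iff_isUnit_det _).mp hunit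
  set b : Fin d → ℝ := (C n₀)⁻¹.mulVec (γ n₀) with hb
  have hCb : (C n₀).mulVec b = γ n₀ := by
    rw [hb, Matrix.mulVec_mulVec, Matrix.mul_nonsing_inv _ hdet, Matrix.one_mulVec]
  have hkey : ∀ n : ℕ, 1 ≤ n → γ n = (n : ℝ) • b - (A n).mulVec b := by
    intro n hn
    have h1 : (C n₀).mulVec (γ n) = (C n).mulVec ((C n₀).mulVec b) := by
      rw [hCb]; exact hrel n₀ n (by omega) hn
    rw [Matrix.mulVec_mulVec, (hCcomm n n₀).eq, ← Matrix.mulVec_mulVec] at h1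
    have h2 : γ n = (C n).mulVec b := by
      have h4 := congrArg (fun v => (C n₀)⁻¹.mulVec v) h1
      simpa [Matrix.mulVec_mulVec, ← mul_assoc, Matrix.nonsing_inv_mul _ hdet,
        Matrix.one_mulVec, one_mul] using h4
    rw [h2, hCe]
  refine ⟨b, ?_⟩
  intro n hn
  have hmeas_sub : Measurable (fun x : Fin d → ℝ => x - b) :=
    measurable_pi_iff.mpr fun i =>
      ((measurable_pi_apply i).sub measurable_const :
        Measurable fun x : Fin d → ℝ => x i - b i)
  have hmeasS : Measurable (fun f : Fin n → Fin d → ℝ => ∑ i, f i) :=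
    Finset.measurable_sum _ fun i _ => measurable_pi_apply i
  have hmeasT : Measurable (fun (f : Fin n → Fin d → ℝ) i => f i - b) :=
    measurable_pi_iff.mpr fun i =>
      ((measurable_pi_apply i).sub measurable_const :
        Measurable fun f : Fin n → Fin d → ℝ => f i - b)
  have hmeasA : Measurable (fun x : Fin d → ℝ => (A n).mulVec x) :=
    ((A n).mulVecLin.continuous_of_finiteDimensional :
      Continuous fun x : Fin d → ℝ => (A n).mulVec x).measurable
  have hmeasAdd : Measurable (fun x : Fin d → ℝ => (A n).mulVec x + γ n) :=
    hmeasA.add_const _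
  have hmeas_subn : Measurable (fun y : Fin d → ℝ => y - n • b) :=
    measurable_pi_iff.mpr fun i =>
      ((measurable_pi_apply i).sub measurable_const :
        Measurable fun y : Fin d → ℝ => y i - (n • b) i)
  haveI : IsProbabilityMeasure (Measure.map (fun x : Fin d → ℝ => x - b) μ) :=
    Measure.isProbabilityMeasure_map hmeas_sub.aemeasurable
  have hpi : (Measure.pi fun _ : Fin n => Measure.map (fun x : Fin d → ℝ => x - b) μ)
      = Measure.map (fun (f : Fin n → Fin d → ℝ) i => f i - b) (Measure.pi fun _ => μ) :=
    (measurePreserving_pi _ _ fun _ => ⟨hmeas_sub, rfl⟩).map_eq.symm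
  calc Measure.map (fun f : Fin n → Fin d → ℝ => ∑ i, f i)
        (Measure.pi fun _ => Measure.map (fun x : Fin d → ℝ => x - b) μ)
      = Measure.map (fun f : Fin n → Fin d → ℝ => ∑ i, f i)
          (Measure.map (fun (f : Fin n → Fin d → ℝ) i => f i - b)
            (Measure.pi fun _ => μ)) := by rw [hpi]
    _ = Measure.map ((fun f : Fin n → Fin d → ℝ => ∑ i, f i)
          ∘ (fun (f : Fin n → Fin d → ℝ) i => f i - b)) (Measure.pi fun _ => μ) :=
        Measure.map_map hmeasS hmeasT
    _ = Measure.map ((fun y : Fin d → ℝ => y - n • b)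
          ∘ (fun f : Fin n → Fin d → ℝ => ∑ i, f i)) (Measure.pi fun _ => μ) := by
        congr 1
        funext f
        simp [Function.comp, Finset.sum_sub_distrib, Finset.card_univ]
    _ = Measure.map (fun y : Fin d → ℝ => y - n • b)
          (Measure.map (fun f : Fin n → Fin d → ℝ => ∑ i, f i)
            (Measure.pi fun _ => μ)) := (Measure.map_map hmeas_subn hmeasS).symm
    _ = Measure.map (fun y : Fin d → ℝ => y - n • b)
          (Measure.map (fun x : Fin d → ℝ => (A n).mulVec x + γ n) μ) := by
        rw [hstable n hn]
    _ = Measure.map ((fun y : Fin d → ℝ => y - n • b)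
          ∘ (fun x : Fin d → ℝ => (A n).mulVec x + γ n)) μ :=
        Measure.map_map hmeas_subn hmeasAdd
    _ = Measure.map ((fun x : Fin d → ℝ => (A n).mulVec x)
          ∘ (fun x : Fin d → ℝ => x - b)) μ := by
        congr 1
        funext x
        simp only [Function.comp_apply]
        rw [Matrix.mulVec_sub, hkey n hn, ← Nat.cast_smul_eq_nsmul ℝ n b]
        abel
    _ = Measure.map (fun x : Fin d → ℝ => (A n).mulVec x)
          (Measure.map (fun x : Fin d → ℝ => x - b) μ) :=
        (Measure.map_map hmeasA hmeas_sub).symm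
end

section
/- Let A be a positive-definite symmetric matrix on R^d and G a matrix with dilation group T_λ = λ^G. If the symmetric matrix A·G + G*·A is positive semidefinite, then the family of ellipsoidal balls B_λ = {x : ⟨x, A_λ x⟩ ≤ 1}, where A_λ = (T_λ⁻¹)* A T_λ⁻¹, is increasing in λ: λ' ≤ λ implies B_{λ'} ⊆ B_λ. -/
open Matrix

section aux

attribute [local instance] Matrix.linftyOpNormedRing Matrix.linftyOpNormedAlgebra

variable {d : ℕ}

/-- `M ↦ M.mulVec x` as a continuous linear map. -/
noncomputable def mulVecCLM (x : Fin d → ℝ) :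
    Matrix (Fin d) (Fin d) ℝ →L[ℝ] (Fin d → ℝ) :=
  LinearMap.toContinuousLinearMap
    { toFun := fun M => M.mulVec x
      map_add' := fun M N => Matrix.add_mulVec M N x
      map_smul' := fun c M => Matrix.smul_mulVec c M x }

lemma hasDerivAt_expvec (G : Matrix (Fin d) (Fin d) ℝ) (x : Fin d → ℝ) (t : ℝ) :
    HasDerivAt (fun s : ℝ => (NormedSpace.exp (s • (-G))).mulVec x)
      ((NormedSpace.exp (t • (-G)) * (-G)).mulVec x) t := by
  have hE : HasDerivAt (fun s : ℝ => NormedSpace.exp (s • (-G)))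
      (NormedSpace.exp (t • (-G)) * (-G)) t := hasDerivAt_exp_smul_const (-G) t
  have := ((mulVecCLM x).hasFDerivAt.comp_hasDerivAt t hE)
  exact this

lemma trans_dot (M : Matrix (Fin d) (Fin d) ℝ) (v w : Fin d → ℝ) :
    (M.mulVec v) ⬝ᵥ w = v ⬝ᵥ Mᵀ.mulVec w := by
  rw [← Matrix.vecMul_transpose, ← Matrix.dotProduct_mulVec]

lemma quad_deriv_eq (A G : Matrix (Fin d) (Fin d) ℝ) (u : Fin d → ℝ) :
    (-(G.mulVec u)) ⬝ᵥ A.mulVec u + u ⬝ᵥ A.mulVec (-(G.mulVec u))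
      = -(u ⬝ᵥ (A * G + Gᵀ * A).mulVec u) := by
  rw [neg_dotProduct, Matrix.mulVec_neg, dotProduct_neg, trans_dot,
    Matrix.mulVec_mulVec, Matrix.mulVec_mulVec, Matrix.add_mulVec, dotProduct_add]
  ring

lemma key (A G : Matrix (Fin d) (Fin d) ℝ)
    (hpos : (A * G + Gᵀ * A).PosSemidef) (x : Fin d → ℝ) :
    Antitone (fun t : ℝ =>
      x ⬝ᵥ (((NormedSpace.exp (t • (-G)))ᵀ * A *
        NormedSpace.exp (t • (-G))).mulVec x)) := by
  set E : ℝ → Matrix (Fin d) (Fin d) ℝ := fun t => NormedSpace.exp (t • (-G)) with hEdef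
  set u : ℝ → (Fin d → ℝ) := fun t => (E t).mulVec x with hudef
  have hfeq : (fun t : ℝ => x ⬝ᵥ (((E t)ᵀ * A * E t).mulVec x))
      = fun t : ℝ => u t ⬝ᵥ A.mulVec (u t) := by
    funext t
    rw [Matrix.mul_assoc, ← Matrix.mulVec_mulVec, Matrix.dotProduct_mulVec,
      Matrix.vecMul_transpose, ← Matrix.mulVec_mulVec]
  have main : ∀ t : ℝ, HasDerivAt (fun s : ℝ => u s ⬝ᵥ A.mulVec (u s))
      (-(u t ⬝ᵥ (A * G + Gᵀ * A).mulVec (u t))) t := by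
    intro t
    have hu := hasDerivAt_expvec G x t
    -- the exponential commutes with G
    have hcomm : E t * G = G * E t := by
      have : Commute (t • (-G)) G := by
        simpa using (Commute.refl G).neg_left.smul_left t
      exact (this.exp_left)
    have hu' : (E t * (-G)).mulVec x = -(G.mulVec (u t)) := by
      rw [Matrix.mul_neg, Matrix.neg_mulVec, hcomm, Matrix.mulVec_mulVec]
    have hui : ∀ i, HasDerivAt (fun s => u s i) ((E t * (-G)).mulVec x i) t := fun i =>
      (ContinuousLinearMap.proj (R := ℝ) (φ := fun _ : Fin d => ℝ) i).hasFDerivAt.comp_hasDerivAt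
        t hu
    have h1 : HasDerivAt (fun s : ℝ => ∑ i, u s i * ∑ j, A i j * u s j)
        (∑ i, ((E t * (-G)).mulVec x i * ∑ j, A i j * u t j
          + u t i * ∑ j, A i j * (E t * (-G)).mulVec x j)) t :=
      HasDerivAt.fun_sum fun i _ =>
        (hui i).mul (HasDerivAt.fun_sum fun j _ => (hui j).const_mul (A i j))
    have heq2 : (fun s : ℝ => ∑ i, u s i * ∑ j, A i j * u s j)
        = fun s : ℝ => u s ⬝ᵥ A.mulVec (u s) := by
      funext s; simp [dotProduct, Matrix.mulVec]
    rw [heq2] at h1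
    convert h1 using 1
    have step1 : ∑ i, ((E t * (-G)).mulVec x i * ∑ j, A i j * u t j
          + u t i * ∑ j, A i j * (E t * (-G)).mulVec x j)
        = ((E t * (-G)).mulVec x) ⬝ᵥ A.mulVec (u t)
          + u t ⬝ᵥ A.mulVec ((E t * (-G)).mulVec x) := by
      simp [dotProduct, Matrix.mulVec, Finset.sum_add_distrib]
    rw [step1, hu', quad_deriv_eq]
  have hant : Antitone fun s : ℝ => u s ⬝ᵥ A.mulVec (u s) :=
    antitone_of_deriv_nonpos (fun t => (main t).differentiableAt) fun t => by
      rw [(main t).deriv]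
      have := hpos.dotProduct_mulVec_nonneg (u t)
      simpa using this
  rw [hEdef] at hfeq
  rw [hfeq]
  exact hant

end aux

/-- Let `A` be positive-definite symmetric and `G` a matrix with dilation
group `T_λ = λ^G`. If `A G + Gᵀ A` is positive semidefinite, then the ellipsoidal balls
`B_λ = {x : ⟨x, A_λ x⟩ ≤ 1}` with `A_λ = (T_λ⁻¹)ᵀ A T_λ⁻¹` are increasing in `λ`. -/
theorem ellipsoid_balls_increasing_of_posSemidef {d : ℕ}
    (A G : Matrix (Fin d) (Fin d) ℝ)
    (hAsym : Aᵀ = A) (hA : A.PosDef)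
    (hpos : (A * G + Gᵀ * A).PosSemidef) :
    ∀ l l' : ℝ, 0 < l' → l' ≤ l →
      {x : Fin d → ℝ |
          x ⬝ᵥ (((NormedSpace.exp (Real.log l' • (-G)))ᵀ * A *
            NormedSpace.exp (Real.log l' • (-G))).mulVec x) ≤ 1}
        ⊆ {x : Fin d → ℝ |
          x ⬝ᵥ (((NormedSpace.exp (Real.log l • (-G)))ᵀ * A *
            NormedSpace.exp (Real.log l • (-G))).mulVec x) ≤ 1} := by
  intro l l' hl' hle x hx
  have hlog : Real.log l' ≤ Real.log l := Real.log_le_log hl' hle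
  exact le_trans (key A G hpos x hlog) hx
end

section
/- Conversely, if the ellipsoidal balls B_λ = {x : ⟨x, A_λ x⟩ ≤ 1} with A_λ = (T_λ⁻¹)* A T_λ⁻¹ are increasing in λ for the dilation group T_λ = λ^G, then sym(A·G) = (A G + G* A)/2 is positive semidefinite. -/
open Matrix

private lemma quad_form_eq {d : ℕ} (A M : Matrix (Fin d) (Fin d) ℝ) (x : Fin d → ℝ) :
    x ⬝ᵥ (Mᵀ * A * M).mulVec x = (M.mulVec x) ⬝ᵥ A.mulVec (M.mulVec x) := by
  rw [← Matrix.mulVec_mulVec, ← Matrix.mulVec_mulVec, Matrix.dotProduct_mulVec,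
    Matrix.vecMul_transpose]

private lemma quad_smul {d : ℕ} (M : Matrix (Fin d) (Fin d) ℝ) (a : ℝ) (x : Fin d → ℝ) :
    (a • x) ⬝ᵥ M.mulVec (a • x) = a ^ 2 * (x ⬝ᵥ M.mulVec x) := by
  rw [Matrix.mulVec_smul, smul_dotProduct, dotProduct_smul, smul_eq_mul, smul_eq_mul]
  ring

private lemma deriv_nonpos_of_antitone {f : ℝ → ℝ} {f' : ℝ}
    (hf : Antitone f) (h : HasDerivAt f f' 0) : f' ≤ 0 := by
  have h1 : Filter.Tendsto (slope f 0) (nhdsWithin 0 {(0:ℝ)}ᶜ) (nhds f') :=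
    hasDerivAt_iff_tendsto_slope.mp h
  have h2 : Filter.Tendsto (slope f 0) (nhdsWithin 0 (Set.Ioi (0:ℝ))) (nhds f') :=
    h1.mono_left (nhdsWithin_mono _ (fun t ht => ne_of_gt ht))
  refine le_of_tendsto h2 ?_
  filter_upwards [self_mem_nhdsWithin] with t ht
  have htpos : (0:ℝ) < t := ht
  have : f t ≤ f 0 := hf htpos.le
  rw [slope_def_field]
  simp only [sub_zero]
  exact div_nonpos_of_nonpos_of_nonneg (by linarith) htpos.le

/-- Conversely, if the ellipsoidal balls `B_λ = {x : ⟨x, A_λ x⟩ ≤ 1}`,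
with `A_λ = (T_λ⁻¹)ᵀ A T_λ⁻¹` and `T_λ = λ^G`, are increasing in `λ`, then
`sym(A G) = (A G + Gᵀ A)/2` is positive semidefinite. -/
theorem posSemidef_of_ellipsoid_balls_increasing {d : ℕ}
    (A G : Matrix (Fin d) (Fin d) ℝ)
    (hAsym : Aᵀ = A) (hA : A.PosDef)
    (hmono : ∀ l l' : ℝ, 0 < l' → l' ≤ l →
      {x : Fin d → ℝ |
          x ⬝ᵥ (((NormedSpace.exp (Real.log l' • (-G)))ᵀ * A *
            NormedSpace.exp (Real.log l' • (-G))).mulVec x) ≤ 1}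
        ⊆ {x : Fin d → ℝ |
          x ⬝ᵥ (((NormedSpace.exp (Real.log l • (-G)))ᵀ * A *
            NormedSpace.exp (Real.log l • (-G))).mulVec x) ≤ 1}) :
    (((1 : ℝ) / 2) • (A * G + Gᵀ * A)).PosSemidef := by
  set B : Matrix (Fin d) (Fin d) ℝ := -G with hB
  set E : ℝ → Matrix (Fin d) (Fin d) ℝ := fun t => NormedSpace.exp (t • B) with hE
  set q : ℝ → (Fin d → ℝ) → ℝ := fun t x => x ⬝ᵥ ((E t)ᵀ * A * E t).mulVec x with hq
  -- positivity of the quadratic forms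
  have hqpos : ∀ t : ℝ, ∀ x : Fin d → ℝ, x ≠ 0 → 0 < q t x := by
    intro t x hx
    have hker : (E t).mulVec x ≠ 0 := by
      intro h
      have hinj : Function.Injective ((E t).mulVec) :=
        Matrix.mulVec_injective_iff_isUnit.2 (Matrix.isUnit_exp _)
      apply hx
      apply hinj
      simpa using h
    have h2 := hA.dotProduct_mulVec_pos hker
    have h3 : q t x = (E t).mulVec x ⬝ᵥ A.mulVec ((E t).mulVec x) := quad_form_eq A (E t) x
    rw [h3]
    simpa [dotProduct] using h2
  -- monotonicity of the quadratic forms in t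
  have hmono' : ∀ (x : Fin d → ℝ) (t t' : ℝ), t' ≤ t → q t x ≤ q t' x := by
    intro x t t' htt
    rcases eq_or_ne x 0 with rfl | hx
    · simp [hq]
    have hsub := hmono (Real.exp t) (Real.exp t') (Real.exp_pos t')
      (Real.exp_le_exp.2 htt)
    simp only [Real.log_exp] at hsub
    have hc : 0 < q t' x := hqpos t' x hx
    set c : ℝ := Real.sqrt (q t' x) with hcdef
    have hcpos : 0 < c := Real.sqrt_pos.2 hc
    have hc2 : c ^ 2 = q t' x := Real.sq_sqrt hc.le
    have hmem : (c⁻¹ • x) ⬝ᵥ (((E t')ᵀ * A * E t').mulVec (c⁻¹ • x)) ≤ 1 := by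
      rw [quad_smul, inv_pow]
      have : x ⬝ᵥ (((E t')ᵀ * A * E t').mulVec x) = q t' x := rfl
      rw [this, ← hc2]
      rw [inv_mul_cancel₀ (ne_of_gt (by positivity))]
    have h2 : (c⁻¹ • x) ⬝ᵥ (((E t)ᵀ * A * E t).mulVec (c⁻¹ • x)) ≤ 1 := hsub hmem
    rw [quad_smul, inv_pow] at h2
    have h3 : x ⬝ᵥ (((E t)ᵀ * A * E t).mulVec x) = q t x := rfl
    rw [h3] at h2
    have h4 : q t x ≤ c ^ 2 := by
      have hcc : (0:ℝ) < c ^ 2 := by positivity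
      calc q t x = c ^ 2 * ((c ^ 2)⁻¹ * q t x) := by field_simp
        _ ≤ c ^ 2 * 1 := mul_le_mul_of_nonneg_left h2 hcc.le
        _ = c ^ 2 := mul_one _
    linarith [hc2]
  -- derivative of q · x at 0
  have hD : ∀ x : Fin d → ℝ,
      HasDerivAt (fun t => q t x)
        ((B.mulVec x) ⬝ᵥ A.mulVec x + x ⬝ᵥ A.mulVec (B.mulVec x)) 0 := by
    intro x
    letI : SeminormedRing (Matrix (Fin d) (Fin d) ℝ) := Matrix.linftyOpSemiNormedRing
    letI : NormedRing (Matrix (Fin d) (Fin d) ℝ) := Matrix.linftyOpNormedRing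
    letI : NormedAlgebra ℝ (Matrix (Fin d) (Fin d) ℝ) := Matrix.linftyOpNormedAlgebra
    have hexp : HasDerivAt (fun t : ℝ => E t) (E 0 * B) 0 :=
      hasDerivAt_exp_smul_const B (0:ℝ)
    have hE0 : E 0 = 1 := by simp [hE]
    let φ : Matrix (Fin d) (Fin d) ℝ →ₗ[ℝ] (Fin d → ℝ) :=
      { toFun := fun M => M.mulVec x
        map_add' := fun M N => Matrix.add_mulVec M N x
        map_smul' := fun c M => Matrix.smul_mulVec c M x }
    have hu : HasDerivAt (fun t => (E t).mulVec x) (B.mulVec x) 0 := by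
      have h1 := (φ.toContinuousLinearMap.hasFDerivAt (x := E 0)).comp_hasDerivAt 0 hexp
      have h2 : φ (E 0 * B) = B.mulVec x := by
        simp [φ, hE0]
      rw [← h2]
      exact h1
    have hui : ∀ i, HasDerivAt (fun t => (E t).mulVec x i) (B.mulVec x i) 0 :=
      fun i => (hasDerivAt_pi.1 hu) i
    have hform : ∀ t, q t x =
        ∑ i, ∑ j, (E t).mulVec x i * (A i j * (E t).mulVec x j) := by
      intro t
      have h3 : q t x = (E t).mulVec x ⬝ᵥ A.mulVec ((E t).mulVec x) := quad_form_eq A (E t) x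
      rw [h3]
      simp [dotProduct, Matrix.mulVec, Finset.mul_sum]
    have hsum : HasDerivAt
        (fun t => ∑ i, ∑ j, (E t).mulVec x i * (A i j * (E t).mulVec x j))
        (∑ i, ∑ j, (B.mulVec x i * (A i j * (E 0).mulVec x j) +
          (E 0).mulVec x i * (A i j * B.mulVec x j))) 0 := by
      apply HasDerivAt.fun_sum
      intro i _
      apply HasDerivAt.fun_sum
      intro j _
      exact (hui i).mul ((hui j).const_mul (A i j))
    have heq : (fun t => q t x) =
        fun t => ∑ i, ∑ j, (E t).mulVec x i * (A i j * (E t).mulVec x j) :=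
      funext hform
    rw [heq]
    convert hsum using 1
    rw [hE0]
    simp only [Matrix.one_mulVec, Finset.sum_add_distrib]
    congr 1
    · simp only [dotProduct, Matrix.mulVec, Finset.mul_sum]
    · simp only [dotProduct, Matrix.mulVec, Finset.mul_sum]
  -- nonpositivity of the derivative from antitonicity
  have hDle : ∀ x : Fin d → ℝ,
      (B.mulVec x) ⬝ᵥ A.mulVec x + x ⬝ᵥ A.mulVec (B.mulVec x) ≤ 0 := by
    intro x
    have hanti : Antitone (fun t => q t x) := fun a b hab => hmono' x b a hab
    exact deriv_nonpos_of_antitone hanti (hD x)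
  -- conclude
  have hquad : ∀ x : Fin d → ℝ, 0 ≤ x ⬝ᵥ (A * G + Gᵀ * A).mulVec x := by
    intro x
    have h1 := hDle x
    have h2 : B.mulVec x = -(G.mulVec x) := by rw [hB, Matrix.neg_mulVec]
    rw [h2, neg_dotProduct, Matrix.mulVec_neg, dotProduct_neg] at h1
    have h3 : x ⬝ᵥ (A * G + Gᵀ * A).mulVec x =
        (G.mulVec x) ⬝ᵥ A.mulVec x + x ⬝ᵥ A.mulVec (G.mulVec x) := by
      rw [Matrix.add_mulVec, dotProduct_add, ← Matrix.mulVec_mulVec,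
        ← Matrix.mulVec_mulVec, Matrix.dotProduct_mulVec x Gᵀ,
        Matrix.vecMul_transpose, add_comm]
    rw [h3]
    linarith
  rw [posSemidef_iff_dotProduct_mulVec]
  constructor
  · have hsymm : (A * G + Gᵀ * A)ᵀ = A * G + Gᵀ * A := by
      rw [Matrix.transpose_add, Matrix.transpose_mul, Matrix.transpose_mul,
        Matrix.transpose_transpose, hAsym, add_comm]
    show (((1:ℝ)/2) • (A * G + Gᵀ * A))ᴴ = ((1:ℝ)/2) • (A * G + Gᵀ * A)
    ext i j
    simp only [Matrix.conjTranspose_apply, Matrix.smul_apply, star_trivial, smul_eq_mul]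
    have := congrFun (congrFun hsymm i) j
    simp only [Matrix.transpose_apply] at this
    rw [this]
  · intro x
    have := hquad x
    simp only [star_trivial, Matrix.smul_mulVec, dotProduct_smul, smul_eq_mul]
    positivity
end

section
/- Let F be a σ-finite measure on R^d \ {0} satisfying the scaling property F(T_λ*(E)) = λ⁻¹ F(E) for all λ > 0 and Borel sets E, where T_λ* = λ^{G*} is a dilation group defining a generalized scale ‖·‖. Then under the change of variables y ↦ (‖y‖, u(y)) ∈ R⁺ × ∂B_1, F factors as dF = dΣ(u) ⊗ dλ/λ² for some finite positive measure Σ on ∂B_1, provided F(B_1^c) < ∞. -/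
open Matrix MeasureTheory
open scoped ENNReal

private lemma levy_aux_exp_cont {d : ℕ} (M : Matrix (Fin d) (Fin d) ℝ) :
    Continuous fun t : ℝ => NormedSpace.exp (t • M) := by
  letI : SeminormedRing (Matrix (Fin d) (Fin d) ℝ) := Matrix.linftyOpSemiNormedRing
  letI : NormedRing (Matrix (Fin d) (Fin d) ℝ) := Matrix.linftyOpNormedRing
  letI : NormedAlgebra ℝ (Matrix (Fin d) (Fin d) ℝ) := Matrix.linftyOpNormedAlgebra
  let +nondep : NormedAlgebra ℚ (Matrix (Fin d) (Fin d) ℝ) := .restrictScalars ℚ ℝ _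
  exact NormedSpace.exp_continuous.comp (continuous_id.smul continuous_const)

private lemma levy_aux_mulVec_cont {d : ℕ} :
    Continuous fun p : (Matrix (Fin d) (Fin d) ℝ) × (Fin d → ℝ) => p.1.mulVec p.2 := by
  apply continuous_pi
  intro i
  simp only [Matrix.mulVec, dotProduct]
  refine continuous_finset_sum _ fun j _ => Continuous.mul ?_ ?_
  · exact ((continuous_apply j).comp ((continuous_apply i).comp continuous_fst))
  · exact (continuous_apply j).comp continuous_snd

private lemma levy_aux_u_meas {d : ℕ} (G : Matrix (Fin d) (Fin d) ℝ)
    (s : (Fin d → ℝ) → ℝ) (hs : Measurable s) :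
    Measurable fun y : Fin d → ℝ =>
      (NormedSpace.exp ((-Real.log (s y)) • Gᵀ)).mulVec y := by
  have h1 : Measurable fun p : ℝ × (Fin d → ℝ) =>
      (NormedSpace.exp ((-p.1) • Gᵀ)).mulVec p.2 :=
    (levy_aux_mulVec_cont.comp
      (((levy_aux_exp_cont Gᵀ).comp continuous_fst.neg).prodMk continuous_snd)).measurable
  have h2 : Measurable fun y : Fin d → ℝ => (Real.log (s y), y) :=
    (Real.measurable_log.comp hs).prodMk measurable_id
  have h4 : (fun y : Fin d → ℝ => (NormedSpace.exp ((-Real.log (s y)) • Gᵀ)).mulVec y)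
      = (fun p : ℝ × (Fin d → ℝ) => (NormedSpace.exp ((-p.1) • Gᵀ)).mulVec p.2)
        ∘ (fun y => (Real.log (s y), y)) := by
    funext y
    rfl
  rw [h4]
  exact h1.comp h2

set_option maxHeartbeats 1000000 in
/-- Let `F` be a σ-finite measure on `ℝ^d \ {0}` satisfying the Lévy
scaling `F (T_λ* E) = λ⁻¹ F E` for all `λ > 0`, where `T_λ* = λ^{Gᵀ}` is a dilation group
defining a generalized scale `s`, and with `F` finite outside the unit ball. Then under
the change of variables `y ↦ (s y, u y)` with `u y = (T_{s y}*)⁻¹ y`, `F` factors as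
`dΣ(u) ⊗ dλ/λ²` for some finite positive measure `Σ` carried by the unit sphere
`∂B₁ = {s = 1}`. -/
theorem levy_canonical_measure_factorization {d : ℕ}
    (G : Matrix (Fin d) (Fin d) ℝ)
    (T : ℝ → Matrix (Fin d) (Fin d) ℝ)
    (hT : ∀ l : ℝ, 0 < l → T l = NormedSpace.exp (Real.log l • Gᵀ))
    (s : (Fin d → ℝ) → ℝ) (hs : Measurable s)
    (hnonneg : ∀ x, 0 ≤ s x)
    (hdeg : ∀ x, s x = 0 ↔ x = 0)
    (hscal : ∀ l : ℝ, 0 < l → ∀ x, s ((T l).mulVec x) = l * s x)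
    (F : Measure (Fin d → ℝ)) [SigmaFinite F]
    (hF0 : F {0} = 0)
    (hFscal : ∀ l : ℝ, 0 < l → ∀ E : Set (Fin d → ℝ), MeasurableSet E →
      F ((fun y => (T l).mulVec y) '' E) = (ENNReal.ofReal l)⁻¹ * F E)
    (hFfin : F {x | 1 < s x} < ⊤) :
    ∃ Sig : Measure (Fin d → ℝ), IsFiniteMeasure Sig ∧ Sig {x | s x ≠ 1} = 0 ∧
      Measure.map (fun y => (s y, (T (s y))⁻¹.mulVec y)) F
        = (((volume : Measure ℝ).restrict (Set.Ioi 0)).withDensity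
            (fun l => ENNReal.ofReal (1 / l ^ 2))).prod Sig := by
  classical
  have hspos : ∀ {x : Fin d → ℝ}, x ≠ 0 → 0 < s x := by
    intro x hx
    exact lt_of_le_of_ne (hnonneg x) (fun h => hx ((hdeg x).mp h.symm))
  -- group properties of T
  have hTmul : ∀ a b : ℝ, 0 < a → 0 < b → T a * T b = T (a * b) := by
    intro a b ha hb
    rw [hT a ha, hT b hb, hT _ (mul_pos ha hb), Real.log_mul ha.ne' hb.ne', add_smul]
    exact (Matrix.exp_add_of_commute _ _ (((Commute.refl Gᵀ).smul_left _).smul_right _)).symm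
  have hTone : T 1 = 1 := by
    rw [hT 1 one_pos, Real.log_one, zero_smul]
    exact NormedSpace.exp_zero
  have hTexp : ∀ a : ℝ, 0 < a → T a⁻¹ = NormedSpace.exp ((-Real.log a) • Gᵀ) := by
    intro a ha
    rw [hT _ (inv_pos.mpr ha), Real.log_inv]
  have hTinv : ∀ a : ℝ, 0 < a → (T a)⁻¹ = T a⁻¹ := by
    intro a ha
    rw [hT a ha, hTexp a ha, neg_smul]
    exact (Matrix.exp_neg _).symm
  have hTinvmul : ∀ a : ℝ, 0 < a → T a⁻¹ * T a = 1 := by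
    intro a ha
    rw [hTmul _ _ (inv_pos.mpr ha) ha, inv_mul_cancel₀ ha.ne', hTone]
  have hTmulinv : ∀ a : ℝ, 0 < a → T a * T a⁻¹ = 1 := by
    intro a ha
    rw [hTmul _ _ ha (inv_pos.mpr ha), mul_inv_cancel₀ ha.ne', hTone]
  have hcancel : ∀ (a : ℝ) (x : Fin d → ℝ), 0 < a →
      (T a⁻¹).mulVec ((T a).mulVec x) = x := by
    intro a x ha
    rw [Matrix.mulVec_mulVec, hTinvmul a ha, Matrix.one_mulVec]
  have hcancel' : ∀ (a : ℝ) (x : Fin d → ℝ), 0 < a →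
      (T a).mulVec ((T a⁻¹).mulVec x) = x := by
    intro a x ha
    rw [Matrix.mulVec_mulVec, hTmulinv a ha, Matrix.one_mulVec]
  -- the angular part
  set u : (Fin d → ℝ) → (Fin d → ℝ) :=
    fun y => (NormedSpace.exp ((-Real.log (s y)) • Gᵀ)).mulVec y with hu_def
  have humeas : Measurable u := levy_aux_u_meas G s hs
  have hueq : ∀ y : Fin d → ℝ, y ≠ 0 → u y = (T (s y)⁻¹).mulVec y := by
    intro y hy
    rw [hu_def, hTexp _ (hspos hy)]
  have hTne : ∀ (a : ℝ) (x : Fin d → ℝ), 0 < a → x ≠ 0 → (T a).mulVec x ≠ 0 := by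
    intro a x ha hx h
    have h1 : s ((T a).mulVec x) = a * s x := hscal a ha x
    rw [h, (hdeg 0).mpr rfl] at h1
    exact absurd h1.symm (ne_of_gt (mul_pos ha (hspos hx)))
  have huinv : ∀ (a : ℝ) (x : Fin d → ℝ), 0 < a → x ≠ 0 →
      u ((T a).mulVec x) = u x := by
    intro a x ha hx
    rw [hueq _ (hTne a x ha hx), hueq _ hx, hscal a ha x, _root_.mul_inv_rev,
      ← hTmul _ _ (inv_pos.mpr (hspos hx)) (inv_pos.mpr ha),
      ← Matrix.mulVec_mulVec, hcancel a x ha]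
  have hsu : ∀ y : Fin d → ℝ, y ≠ 0 → s (u y) = 1 := by
    intro y hy
    rw [hueq y hy, hscal _ (inv_pos.mpr (hspos hy)) y, inv_mul_cancel₀ (hspos hy).ne']
  -- measurability of basic sets
  have hmeasSet : ∀ (a : ℝ) (B : Set (Fin d → ℝ)), MeasurableSet B →
      MeasurableSet {y | a < s y ∧ u y ∈ B} := by
    intro a B hB
    exact (hs measurableSet_Ioi).inter (humeas hB)
  have hmeasSet2 : ∀ (A : Set ℝ) (B : Set (Fin d → ℝ)), MeasurableSet A → MeasurableSet B →
      MeasurableSet {y | s y ∈ A ∧ u y ∈ B} := by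
    intro A B hA hB
    exact (hs hA).inter (humeas hB)
  -- the spherical measure
  set Sig : Measure (Fin d → ℝ) := (F.restrict {y | 1 < s y}).map u with hSig_def
  have hSig : ∀ B : Set (Fin d → ℝ), MeasurableSet B →
      Sig B = F {y | 1 < s y ∧ u y ∈ B} := by
    intro B hB
    rw [hSig_def, Measure.map_apply humeas hB, Measure.restrict_apply (humeas hB)]
    congr 1
    ext y
    simp only [Set.mem_inter_iff, Set.mem_preimage, Set.mem_setOf_eq]
    exact and_comm
  have Sfin : ∀ B : Set (Fin d → ℝ), F {y | 1 < s y ∧ u y ∈ B} ≠ ⊤ :=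
    fun B => (lt_of_le_of_lt (measure_mono fun y hy => hy.1) hFfin).ne
  -- key scaling identity
  have key : ∀ a : ℝ, 0 < a → ∀ B : Set (Fin d → ℝ), MeasurableSet B →
      F {y | a < s y ∧ u y ∈ B}
        = (ENNReal.ofReal a)⁻¹ * F {y | 1 < s y ∧ u y ∈ B} := by
    intro a ha B hB
    have himg : (fun y => (T a).mulVec y) '' {y | 1 < s y ∧ u y ∈ B}
        = {y | a < s y ∧ u y ∈ B} := by
      ext y
      constructor
      · rintro ⟨x, ⟨hx1, hxB⟩, rfl⟩
        have hx0 : x ≠ 0 := by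
          intro h
          rw [h, (hdeg 0).mpr rfl] at hx1
          linarith
        refine ⟨?_, ?_⟩
        · rw [hscal a ha x]
          exact (lt_mul_iff_one_lt_right ha).mpr hx1
        · rw [huinv a x ha hx0]; exact hxB
      · rintro ⟨hy1, hyB⟩
        have hy0 : y ≠ 0 := by
          intro h
          rw [h, (hdeg 0).mpr rfl] at hy1
          linarith
        refine ⟨(T a⁻¹).mulVec y, ⟨?_, ?_⟩, hcancel' a y ha⟩
        · rw [hscal _ (inv_pos.mpr ha) y, inv_mul_eq_div]
          exact (one_lt_div ha).mpr hy1
        · rw [huinv _ _ (inv_pos.mpr ha) hy0]; exact hyB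
    rw [← himg, hFscal a ha _ (hmeasSet 1 B hB)]
  have Ffin : ∀ a : ℝ, 0 < a → ∀ B : Set (Fin d → ℝ), MeasurableSet B →
      F {y | a < s y ∧ u y ∈ B} ≠ ⊤ := by
    intro a ha B hB
    rw [key a ha B hB]
    exact ENNReal.mul_ne_top (ENNReal.inv_ne_top.mpr (ENNReal.ofReal_pos.mpr ha).ne') (Sfin B)
  -- measure of bands
  have band : ∀ a b : ℝ, 0 < a → a ≤ b → ∀ B : Set (Fin d → ℝ), MeasurableSet B →
      F {y | s y ∈ Set.Ioc a b ∧ u y ∈ B}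
        = ENNReal.ofReal (a⁻¹ - b⁻¹) * F {y | 1 < s y ∧ u y ∈ B} := by
    intro a b ha hab B hB
    have hb : 0 < b := lt_of_lt_of_le ha hab
    have hsetdiff : {y | s y ∈ Set.Ioc a b ∧ u y ∈ B}
        = {y | a < s y ∧ u y ∈ B} \ {y | b < s y ∧ u y ∈ B} := by
      ext y
      simp only [Set.mem_Ioc, Set.mem_setOf_eq, Set.mem_diff, not_and]
      constructor
      · rintro ⟨⟨h1, h2⟩, h3⟩
        exact ⟨⟨h1, h3⟩, fun h _ => absurd h2 (not_le.mpr h)⟩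
      · rintro ⟨⟨h1, h3⟩, h⟩
        refine ⟨⟨h1, ?_⟩, h3⟩
        by_contra hh
        exact (h (not_le.mp hh)) h3
    have hsub : {y | b < s y ∧ u y ∈ B} ⊆ {y | a < s y ∧ u y ∈ B} :=
      fun y hy => ⟨lt_of_le_of_lt hab hy.1, hy.2⟩
    rw [hsetdiff, measure_diff hsub (hmeasSet b B hB).nullMeasurableSet (Ffin b hb B hB),
      key a ha B hB, key b hb B hB, ENNReal.ofReal_sub _ (inv_nonneg.mpr hb.le),
      ENNReal.sub_mul (fun _ _ => Sfin B), ENNReal.ofReal_inv_of_pos ha,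
      ENNReal.ofReal_inv_of_pos hb]
  -- the radial measure
  set ν : Measure ℝ := ((volume : Measure ℝ).restrict (Set.Ioi 0)).withDensity
    (fun l => ENNReal.ofReal (1 / l ^ 2)) with hν_def
  have hν : ∀ A : Set ℝ, MeasurableSet A →
      ν A = ∫⁻ l in A ∩ Set.Ioi 0, ENNReal.ofReal (1 / l ^ 2) := by
    intro A hA
    rw [hν_def, withDensity_apply _ hA, Measure.restrict_restrict hA]
  have hνIoc : ∀ a b : ℝ, 0 < a → a ≤ b →
      ν (Set.Ioc a b) = ENNReal.ofReal (a⁻¹ - b⁻¹) := by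
    intro a b ha hab
    rw [hν _ measurableSet_Ioc]
    have hss : Set.Ioc a b ∩ Set.Ioi 0 = Set.Ioc a b :=
      Set.inter_eq_left.mpr (fun x hx => ha.trans hx.1)
    rw [hss]
    have hInt : IntegrableOn (fun l : ℝ => 1 / l ^ 2) (Set.Ioc a b) := by
      apply IntegrableOn.mono_set ?_ Set.Ioc_subset_Icc_self
      apply ContinuousOn.integrableOn_Icc
      apply ContinuousOn.div continuousOn_const (continuousOn_pow 2)
      intro x hx
      exact pow_ne_zero 2 (ne_of_gt (lt_of_lt_of_le ha hx.1))
    rw [← MeasureTheory.ofReal_integral_eq_lintegral_ofReal hInt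
      (Filter.Eventually.of_forall fun x => by positivity)]
    congr 1
    rw [← intervalIntegral.integral_of_le hab]
    have hcongr : Set.EqOn (fun x : ℝ => 1 / x ^ 2) (fun x : ℝ => x ^ (-2 : ℤ))
        (Set.uIcc a b) := by
      intro x _
      simp only [_root_.zpow_neg, one_div]
      norm_cast
    rw [intervalIntegral.integral_congr hcongr]
    have h0 : (0 : ℝ) ∉ Set.uIcc a b := by
      rw [Set.uIcc_of_le hab]
      intro h
      exact absurd h.1 (not_le.mpr ha)
    rw [integral_zpow (Or.inr ⟨by norm_num, h0⟩)]
    norm_num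
    ring
  -- the pushforward measure on rectangles
  have hΦmeas : Measurable fun y : Fin d → ℝ => (s y, u y) := hs.prodMk humeas
  have hμ : ∀ (A : Set ℝ) (B : Set (Fin d → ℝ)), MeasurableSet A → MeasurableSet B →
      (Measure.map (fun y => (s y, u y)) F) (A ×ˢ B) = F {y | s y ∈ A ∧ u y ∈ B} := by
    intro A B hA hB
    rw [Measure.map_apply hΦmeas (hA.prod hB)]
    rfl
  -- rectangle identity for Ioc sets
  have rectIoc : ∀ (a b : ℝ) (B : Set (Fin d → ℝ)), MeasurableSet B →
      F {y | s y ∈ Set.Ioc a b ∧ u y ∈ B} = ν (Set.Ioc a b) * Sig B := by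
    intro a b B hB
    rw [hSig B hB]
    rcases le_or_gt b 0 with hb | hb
    · have h1 : {y | s y ∈ Set.Ioc a b ∧ u y ∈ B} ⊆ {(0 : Fin d → ℝ)} := by
        intro y hy
        have h2 : s y = 0 := le_antisymm (hy.1.2.trans hb) (hnonneg y)
        exact Set.mem_singleton_iff.mpr ((hdeg y).mp h2)
      have hF : F {y | s y ∈ Set.Ioc a b ∧ u y ∈ B} = 0 := measure_mono_null h1 hF0
      have hνz : ν (Set.Ioc a b) = 0 := by
        rw [hν _ measurableSet_Ioc]
        have hset : Set.Ioc a b ∩ Set.Ioi 0 = ∅ := by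
          ext x
          simp only [Set.mem_inter_iff, Set.mem_Ioc, Set.mem_Ioi, Set.mem_empty_iff_false,
            iff_false, not_and]
          intro h1 h2
          linarith [h1]
        rw [hset]
        simp
      rw [hF, hνz, zero_mul]
    · rcases le_or_gt a 0 with ha | ha
      · -- a ≤ 0 < b
        have hset : F {y | s y ∈ Set.Ioc a b ∧ u y ∈ B}
            = F {y | s y ∈ Set.Ioc 0 b ∧ u y ∈ B} := by
          apply le_antisymm
          · refine le_trans (measure_mono (?_ :
              {y | s y ∈ Set.Ioc a b ∧ u y ∈ B}
                ⊆ {y | s y ∈ Set.Ioc 0 b ∧ u y ∈ B} ∪ {0})) ?_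
            · intro y hy
              rcases eq_or_ne y 0 with rfl | hy0
              · exact Or.inr rfl
              · exact Or.inl ⟨⟨hspos hy0, hy.1.2⟩, hy.2⟩
            · refine le_trans (measure_union_le _ _) ?_
              rw [hF0, add_zero]
          · exact measure_mono fun y hy => ⟨⟨lt_of_le_of_lt ha hy.1.1, hy.1.2⟩, hy.2⟩
        have hseteq : Set.Ioc a b ∩ Set.Ioi 0 = Set.Ioc 0 b ∩ Set.Ioi 0 := by
          ext x
          simp only [Set.mem_inter_iff, Set.mem_Ioc, Set.mem_Ioi]
          constructor
          · rintro ⟨⟨h1, h2⟩, h3⟩; exact ⟨⟨h3, h2⟩, h3⟩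
          · rintro ⟨⟨h1, h2⟩, h3⟩; exact ⟨⟨lt_of_le_of_lt ha h3, h2⟩, h3⟩
        have hνset : ν (Set.Ioc a b) = ν (Set.Ioc 0 b) := by
          rw [hν _ measurableSet_Ioc, hν _ measurableSet_Ioc, hseteq]
        rcases eq_or_ne (F {y | 1 < s y ∧ u y ∈ B}) 0 with hS0 | hS0
        · rw [hset, hνset, hS0, mul_zero]
          refine measure_mono_null (?_ :
            {y | s y ∈ Set.Ioc 0 b ∧ u y ∈ B}
              ⊆ ⋃ n : ℕ, {y | 1 / ((n : ℝ) + 1) < s y ∧ u y ∈ B}) ?_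
          · intro y hy
            obtain ⟨n, hn⟩ := exists_nat_one_div_lt hy.1.1
            exact Set.mem_iUnion.mpr ⟨n, hn, hy.2⟩
          · refine measure_iUnion_null fun n => ?_
            rw [key (1 / ((n : ℝ) + 1)) (by positivity) B hB, hS0, mul_zero]
        · rw [hset, hνset]
          have hb2 : (0 : ℝ) < b / 2 := by positivity
          have hdiffpos : (b / 2)⁻¹ - b⁻¹ = 1 / b := by
            rw [inv_div, inv_eq_one_div]
            ring
          have hposF : F {y | s y ∈ Set.Ioc (b / 2) b ∧ u y ∈ B} ≠ 0 := by
            rw [band (b / 2) b hb2 (by linarith) B hB]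
            refine mul_ne_zero ?_ hS0
            rw [hdiffpos]
            simp only [ne_eq, ENNReal.ofReal_eq_zero, not_le]
            positivity
          have hcpos : F {y | s y ∈ Set.Ioc 0 b ∧ u y ∈ B} ≠ 0 := by
            intro h0
            apply hposF
            apply measure_mono_null _ h0
            intro y hy
            exact ⟨⟨lt_trans hb2 hy.1.1, hy.1.2⟩, hy.2⟩
          have hFtop : F {y | s y ∈ Set.Ioc 0 b ∧ u y ∈ B} = ⊤ := by
            by_contra hne
            have himg2 : (fun y => (T 2⁻¹).mulVec y) '' {y | s y ∈ Set.Ioc 0 b ∧ u y ∈ B}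
                ⊆ {y | s y ∈ Set.Ioc 0 b ∧ u y ∈ B} := by
              rintro _ ⟨x, ⟨⟨hx0, hxb⟩, hxB⟩, rfl⟩
              have hx : x ≠ 0 := by
                intro h
                rw [h, (hdeg 0).mpr rfl] at hx0
                exact lt_irrefl 0 hx0
              refine ⟨⟨?_, ?_⟩, ?_⟩
              · rw [hscal _ (by norm_num) x]; positivity
              · rw [hscal _ (by norm_num) x]; linarith
              · rw [huinv _ _ (by norm_num) hx]; exact hxB
            have hdd := hFscal 2⁻¹ (by norm_num) _ (hmeasSet2 (Set.Ioc 0 b) B measurableSet_Ioc hB)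
            have h2c : (ENNReal.ofReal 2⁻¹)⁻¹ * F {y | s y ∈ Set.Ioc 0 b ∧ u y ∈ B}
                ≤ F {y | s y ∈ Set.Ioc 0 b ∧ u y ∈ B} := by
              rw [← hdd]
              exact measure_mono himg2
            have h2 : (ENNReal.ofReal 2⁻¹)⁻¹ = 2 := by
              rw [ENNReal.ofReal_inv_of_pos (by norm_num : (0 : ℝ) < 2), inv_inv]
              norm_num
            rw [h2] at h2c
            have h2c' : 2 * F {y | s y ∈ Set.Ioc 0 b ∧ u y ∈ B}
                ≤ 1 * F {y | s y ∈ Set.Ioc 0 b ∧ u y ∈ B} := by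
              rw [one_mul]; exact h2c
            rw [mul_comm 2 _, mul_comm 1 _] at h2c'
            have := (ENNReal.mul_le_mul_iff_right hcpos hne).mp h2c'
            norm_num at this
          have hνtop : ν (Set.Ioc 0 b) = ⊤ := by
            apply ENNReal.eq_top_of_forall_nnreal_le
            intro r
            set n : ℕ := ⌈(r : ℝ) * b⌉₊ with hn
            have hlow : (0 : ℝ) < b / (n + 1) := by positivity
            have hle : b / (n + 1) ≤ b := div_le_self hb.le (by push_cast; linarith [Nat.cast_nonneg (α := ℝ) n])
            have hval := hνIoc (b / (n + 1)) b hlow hle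
            have hr : (r : ℝ) ≤ (b / (n + 1))⁻¹ - b⁻¹ := by
              rw [inv_div, inv_eq_one_div, div_sub_div_same]
              have h1 : (r : ℝ) * b ≤ n := Nat.le_ceil _
              rw [show ((n : ℝ) + 1 - 1) = (n : ℝ) by ring, le_div_iff₀ hb]
              exact h1
            calc (r : ℝ≥0∞) = ENNReal.ofReal r := (ENNReal.ofReal_coe_nnreal).symm
              _ ≤ ENNReal.ofReal ((b / (n + 1))⁻¹ - b⁻¹) := ENNReal.ofReal_le_ofReal hr
              _ = ν (Set.Ioc (b / (n + 1)) b) := hval.symm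
              _ ≤ ν (Set.Ioc 0 b) := measure_mono (Set.Ioc_subset_Ioc_left hlow.le)
          rw [hFtop, hνtop, ENNReal.top_mul hS0]
      · -- 0 < a
        rcases le_or_gt a b with hab | hab
        · rw [band a b ha hab B hB, hνIoc a b ha hab]
        · rw [Set.Ioc_eq_empty (not_lt.mpr hab.le)]
          have hset : {y : Fin d → ℝ | s y ∈ (∅ : Set ℝ) ∧ u y ∈ B} = ∅ := by
            ext y
            simp only [Set.mem_empty_iff_false, false_and, Set.mem_setOf_eq]
          rw [hset, measure_empty, measure_empty, zero_mul]
  -- rectangle identity for Iic sets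
  have rectIic : ∀ (b : ℝ) (B : Set (Fin d → ℝ)), MeasurableSet B →
      F {y | s y ∈ Set.Iic b ∧ u y ∈ B} = ν (Set.Iic b) * Sig B := by
    intro b B hB
    have h1 : {y | s y ∈ Set.Iic b ∧ u y ∈ B} = {y | s y ∈ Set.Ioc (-1) b ∧ u y ∈ B} := by
      ext y
      simp only [Set.mem_setOf_eq, Set.mem_Iic, Set.mem_Ioc]
      constructor
      · rintro ⟨ha, h2⟩
        exact ⟨⟨lt_of_lt_of_le (by norm_num) (hnonneg y), ha⟩, h2⟩
      · rintro ⟨⟨_, ha⟩, h2⟩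
        exact ⟨ha, h2⟩
    have hseteq : Set.Iic b ∩ Set.Ioi 0 = Set.Ioc (-1) b ∩ Set.Ioi 0 := by
      ext x
      simp only [Set.mem_inter_iff, Set.mem_Iic, Set.mem_Ioc, Set.mem_Ioi]
      constructor
      · rintro ⟨ha, h3⟩
        exact ⟨⟨by linarith, ha⟩, h3⟩
      · rintro ⟨⟨_, ha⟩, h3⟩
        exact ⟨ha, h3⟩
    have h2 : ν (Set.Iic b) = ν (Set.Ioc (-1) b) := by
      rw [hν _ measurableSet_Iic, hν _ measurableSet_Ioc, hseteq]
    rw [h1, h2, rectIoc (-1) b B hB]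
  -- finiteness and sphere property of Sig
  have hSigFin : IsFiniteMeasure Sig := by
    constructor
    rw [hSig _ MeasurableSet.univ]
    exact lt_of_le_of_lt (measure_mono fun y hy => hy.1) hFfin
  have hSphere : Sig {x | s x ≠ 1} = 0 := by
    have hmeas1 : MeasurableSet {x : Fin d → ℝ | s x ≠ 1} :=
      (hs (measurableSet_singleton 1)).compl
    rw [hSig _ hmeas1]
    have hempty : {y | 1 < s y ∧ u y ∈ {x | s x ≠ 1}} = ∅ := by
      ext y
      constructor
      · rintro ⟨h1, h2⟩
        have hy0 : y ≠ 0 := by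
          intro h
          rw [h, (hdeg 0).mpr rfl] at h1
          linarith
        exact absurd (hsu y hy0) h2
      · intro h
        exact absurd h (Set.notMem_empty y)
    rw [hempty, measure_empty]
  -- rewrite the change-of-variables map
  have hΦeq : (fun y => (s y, (T (s y))⁻¹.mulVec y)) = fun y : Fin d → ℝ => (s y, u y) := by
    funext y
    rcases eq_or_ne y 0 with rfl | hy
    · simp only [hu_def, Matrix.mulVec_zero]
    · rw [hueq y hy, hTinv _ (hspos hy)]
  refine ⟨Sig, hSigFin, hSphere, ?_⟩
  rw [hΦeq]
  haveI := hSigFin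
  -- the generating π-system
  set I : Set (Set ℝ) :=
    {A | (∃ a b : ℝ, A = Set.Ioc a b) ∨ (∃ c : ℝ, A = Set.Iic c)} with hI_def
  have hIpi : IsPiSystem I := by
    rintro A (⟨a, b, rfl⟩ | ⟨c, rfl⟩) A' (⟨a', b', rfl⟩ | ⟨c', rfl⟩) _
    · exact Or.inl ⟨a ⊔ a', b ⊓ b', Set.Ioc_inter_Ioc⟩
    · exact Or.inl ⟨a, b ⊓ c', Set.Ioc_inter_Iic a b c'⟩
    · rw [Set.inter_comm]
      exact Or.inl ⟨a', b' ⊓ c, Set.Ioc_inter_Iic a' b' c⟩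
    · exact Or.inr ⟨c ⊓ c', Set.Iic_inter_Iic⟩
  have hIgen : MeasurableSpace.generateFrom I = Real.measurableSpace := by
    apply le_antisymm
    · apply MeasurableSpace.generateFrom_le
      rintro A (⟨a, b, rfl⟩ | ⟨c, rfl⟩)
      exacts [measurableSet_Ioc, measurableSet_Iic]
    · rw [BorelSpace.measurable_eq (α := ℝ), borel_eq_generateFrom_Iic ℝ]
      apply MeasurableSpace.generateFrom_mono
      rintro A ⟨c, rfl⟩
      exact Or.inr ⟨c, rfl⟩
  have hIspan : IsCountablySpanning I := by
    refine ⟨fun n => Set.Iic (n : ℝ), fun n => Or.inr ⟨n, rfl⟩, ?_⟩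
    ext x
    simp only [Set.mem_iUnion, Set.mem_Iic, Set.mem_univ, iff_true]
    exact exists_nat_ge x
  set C : Set (Set (ℝ × (Fin d → ℝ))) :=
    Set.image2 (· ×ˢ ·) I {B | MeasurableSet B} with hC_def
  have hCgen : (inferInstance : MeasurableSpace (ℝ × (Fin d → ℝ)))
      = MeasurableSpace.generateFrom C :=
    (generateFrom_eq_prod hIgen MeasurableSpace.generateFrom_measurableSet hIspan
      isCountablySpanning_measurableSet).symm
  have hCpi : IsPiSystem C := hIpi.prod MeasurableSpace.isPiSystem_measurableSet
  -- the covering sequence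
  set Bcov : ℕ → Set (ℝ × (Fin d → ℝ)) := fun n =>
    Nat.casesOn n (Set.Iic (0 : ℝ) ×ˢ (Set.univ : Set (Fin d → ℝ)))
      (fun m => Set.Ioc (1 / ((m : ℝ) + 2)) ((m : ℝ) + 1) ×ˢ Set.univ) with hBcov_def
  have hIocI : ∀ a b : ℝ, Set.Ioc a b ∈ I := fun a b => Or.inl ⟨a, b, rfl⟩
  have hIicI : ∀ c : ℝ, Set.Iic c ∈ I := fun c => Or.inr ⟨c, rfl⟩
  have hunivD : Set.univ ∈ {B : Set (Fin d → ℝ) | MeasurableSet B} := by rw [Set.mem_setOf_eq]; exact MeasurableSet.univ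
  have hBmem : ∀ n, Bcov n ∈ C := by
    intro n
    cases n with
    | zero =>
      exact Set.mem_image2_of_mem (hIicI 0) hunivD
    | succ m =>
      exact Set.mem_image2_of_mem (hIocI _ _) hunivD
  have hBcover : ⋃ n, Bcov n = Set.univ := by
    ext p
    simp only [Set.mem_iUnion, Set.mem_univ, iff_true]
    rcases le_or_gt p.1 0 with h | h
    · exact ⟨0, h, trivial⟩
    · obtain ⟨n1, hn1⟩ := exists_nat_one_div_lt h
      refine ⟨max n1 ⌈p.1⌉₊ + 1, ⟨?_, ?_⟩, trivial⟩
      · have hle : (1 : ℝ) / (((max n1 ⌈p.1⌉₊ : ℕ) : ℝ) + 2) ≤ 1 / ((n1 : ℝ) + 1) := by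
          apply one_div_le_one_div_of_le (by positivity)
          have h3 : (n1 : ℝ) ≤ ((max n1 ⌈p.1⌉₊ : ℕ) : ℝ) := Nat.cast_le.mpr (le_max_left _ _)
          linarith
        exact lt_of_le_of_lt hle hn1
      · have h1 : p.1 ≤ (⌈p.1⌉₊ : ℝ) := Nat.le_ceil _
        have h2 : ((⌈p.1⌉₊ : ℕ) : ℝ) ≤ ((max n1 ⌈p.1⌉₊ : ℕ) : ℝ) := Nat.cast_le.mpr (le_max_right _ _)
        linarith
  have hBfin : ∀ n, (Measure.map (fun y => (s y, u y)) F) (Bcov n) ≠ ⊤ := by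
    intro n
    cases n with
    | zero =>
      rw [show Bcov 0 = Set.Iic (0 : ℝ) ×ˢ (Set.univ : Set (Fin d → ℝ)) from rfl,
        hμ _ _ measurableSet_Iic MeasurableSet.univ]
      have hsub : {y | s y ∈ Set.Iic 0 ∧ u y ∈ Set.univ} ⊆ {(0 : Fin d → ℝ)} := by
        intro y hy
        have h2 : s y = 0 := le_antisymm hy.1 (hnonneg y)
        simp [Set.mem_singleton_iff, (hdeg y).mp h2]
      rw [measure_mono_null hsub hF0]
      exact ENNReal.zero_ne_top
    | succ m =>
      rw [show Bcov (m + 1)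
          = Set.Ioc (1 / ((m : ℝ) + 2)) ((m : ℝ) + 1) ×ˢ (Set.univ : Set (Fin d → ℝ)) from rfl,
        hμ _ _ measurableSet_Ioc MeasurableSet.univ]
      refine ne_top_of_le_ne_top (Ffin (1 / ((m : ℝ) + 2)) (by positivity) Set.univ
        MeasurableSet.univ) (measure_mono ?_)
      intro y hy
      exact ⟨hy.1.1, trivial⟩
  -- rectangle equality
  have heq : ∀ t ∈ C, (Measure.map (fun y => (s y, u y)) F) t = (ν.prod Sig) t := by
    rintro t ⟨A, hA, B, hB, rfl⟩
    rw [Measure.prod_prod]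
    rcases hA with ⟨a, b, rfl⟩ | ⟨c, rfl⟩
    · rw [hμ _ _ measurableSet_Ioc hB]
      exact rectIoc a b B hB
    · rw [hμ _ _ measurableSet_Iic hB]
      exact rectIic c B hB
  exact MeasureTheory.Measure.ext_of_generateFrom_of_iUnion C Bcov hCgen hCpi hBcover hBmem
    hBfin heq
end

section
/- For α ∈ (0,1) ∪ (1,2) and q > 0, the identity ∫_0^∞ (e^{−qr} − 1 + qr·1_{α>1}) α r^{−α−1} dr = −Γ(1−α)·q^α holds (with the convention that the compensating term qr is present only when α > 1), where Γ is the Euler Gamma function analytically continued. -/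
open MeasureTheory Real Set Filter Topology

lemma hL1 (x : ℝ) : 1 - Real.exp (-x) ≤ x := by
  have := Real.add_one_le_exp (-x); linarith

lemma hL2 {x : ℝ} (hx : 0 ≤ x) : 0 ≤ 1 - Real.exp (-x) := by
  have : Real.exp (-x) ≤ 1 := Real.exp_le_one_iff.mpr (by linarith)
  linarith

lemma hL3 (x : ℝ) : 0 ≤ Real.exp (-x) - 1 + x := by
  have := Real.add_one_le_exp (-x); linarith

lemma hL4 {x : ℝ} (hx : 0 ≤ x) : Real.exp (-x) - 1 + x ≤ x ^ 2 / 2 := by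
  set g : ℝ → ℝ := fun y => y ^ 2 / 2 - (Real.exp (-y) - 1 + y) with hg
  have hd : ∀ y : ℝ, HasDerivAt g (y - 1 + Real.exp (-y)) y := by
    intro y
    have h1 : HasDerivAt (fun y : ℝ => Real.exp (-y)) (-Real.exp (-y)) y := by
      simpa using ((hasDerivAt_id y).neg.exp)
    have h2 : HasDerivAt (fun y : ℝ => y ^ 2 / 2) y y := by
      simpa using ((hasDerivAt_pow 2 y).div_const 2)
    have := (h2.sub ((h1.sub_const 1).add (hasDerivAt_id y)))
    refine this.congr_deriv ?_; ring
  have hmono : MonotoneOn g (Set.Ici (0:ℝ)) := by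
    apply monotoneOn_of_deriv_nonneg (convex_Ici 0)
      (fun y _ => (hd y).continuousAt.continuousWithinAt)
      (fun y _ => (hd y).differentiableAt.differentiableWithinAt)
    intro y hy
    rw [interior_Ici] at hy
    rw [(hd y).deriv]
    have := Real.add_one_le_exp (-y)
    nlinarith [(Set.mem_Ioi.mp hy).le, Real.exp_pos (-y)]
  have h0 : g 0 = 0 := by simp [hg]
  have := hmono (Set.self_mem_Ici) hx hx
  rw [h0] at this
  simpa [hg] using this

lemma hL5 {a q : ℝ} (ha : 0 < a) (hq : 0 < q) :
    IntegrableOn (fun t : ℝ => t ^ (a - 1) * Real.exp (-(q * t))) (Set.Ioi 0) := by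
  have h0 : IntegrableOn (fun x : ℝ => Real.exp (-x) * x ^ (a - 1)) (Set.Ioi 0) :=
    Real.GammaIntegral_convergent ha
  have h1 : IntegrableOn (fun x : ℝ => Real.exp (-(q * x)) * (q * x) ^ (a - 1)) (Set.Ioi 0) := by
    have := (integrableOn_Ioi_comp_mul_left_iff
      (fun x : ℝ => Real.exp (-x) * x ^ (a - 1)) 0 hq).mpr
    simpa using this (by simpa using h0)
  have h2 := h1.const_mul ((q : ℝ) ^ (a - 1))⁻¹
  apply (integrableOn_congr_fun ?_ measurableSet_Ioi).mpr h2
  intro x hx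
  rw [Set.mem_Ioi] at hx
  simp only [Real.mul_rpow hq.le hx.le]
  rw [eq_comm]
  field_simp

lemma hL6 {p : ℝ} (hp : -1 < p) : IntegrableOn (fun x : ℝ => x ^ p) (Set.Ioc (0:ℝ) 1) := by
  have := intervalIntegral.intervalIntegrable_rpow' (a := 0) (b := 1) hp
  rwa [intervalIntegrable_iff_integrableOn_Ioc_of_le (by norm_num)] at this


lemma rpow_congr (r : ℝ) {a b : ℝ} (h : a = b) : r ^ a = r ^ b := by rw [h]

lemma case2 (α : ℝ) (h1 : 1 < α) (h2 : α < 2) (q : ℝ) (hq : 0 < q) :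
    ∫ r in Set.Ioi (0 : ℝ),
        (Real.exp (-(q * r)) - 1 + q * r) * (α * r ^ (-α - 1))
      = -Real.Gamma (1 - α) * q ^ α := by
  have h0 : (0:ℝ) < α := by linarith
  have hne : (1:ℝ) - α ≠ 0 := by intro h; linarith [sub_eq_zero.mp h]
  set f : ℝ → ℝ := fun r => (Real.exp (-(q * r)) - 1 + q * r) * (α * r ^ (-α - 1)) with hf
  set g : ℝ → ℝ := fun r => q ^ 2 / (1 - α) * (Real.exp (-(q * r)) * r ^ (1 - α)) with hg
  set Φ : ℝ → ℝ := fun r =>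
    -((Real.exp (-(q * r)) - 1 + q * r) * r ^ (-α))
      + q * (1 - Real.exp (-(q * r))) * r ^ (1 - α) / (1 - α) with hΦ
  -- derivative
  have hderiv : ∀ x ∈ Set.Ioi (0:ℝ), HasDerivAt Φ (f x + g x) x := by
    intro x hx
    rw [Set.mem_Ioi] at hx
    have hexp : HasDerivAt (fun r : ℝ => Real.exp (-(q * r))) (-q * Real.exp (-(q * x))) x := by
      have h1' : HasDerivAt (fun r : ℝ => -(q * r)) (-q) x := by
        simpa [Pi.neg_def] using ((hasDerivAt_id x).const_mul q).neg
      simpa [mul_comm] using h1'.exp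
    have hu : HasDerivAt (fun r : ℝ => Real.exp (-(q * r)) - 1 + q * r)
        (-q * Real.exp (-(q * x)) + q) x := by
      simpa [Pi.add_def] using ((hexp.sub_const 1).add ((hasDerivAt_id x).const_mul q))
    have hv : HasDerivAt (fun r : ℝ => r ^ (-α)) (-α * x ^ (-α - 1)) x :=
      Real.hasDerivAt_rpow_const (Or.inl (ne_of_gt hx))
    have hw : HasDerivAt (fun r : ℝ => r ^ (1 - α)) ((1 - α) * x ^ ((1 - α) - 1)) x :=
      Real.hasDerivAt_rpow_const (Or.inl (ne_of_gt hx))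
    have hu2 : HasDerivAt (fun r : ℝ => q * (1 - Real.exp (-(q * r))))
        (q * (q * Real.exp (-(q * x)))) x := by
      simpa using ((hexp.const_sub 1).const_mul q)
    have := ((hu.mul hv).neg).add ((hu2.mul hw).div_const (1 - α))
    refine this.congr_deriv ?_
    rw [rpow_congr x (show (1:ℝ) - α - 1 = -α by ring)]
    simp only [hf, hg]
    field_simp
    ring
  -- limit at infinity
  have hexp0 : Tendsto (fun r : ℝ => Real.exp (-(q * r))) atTop (𝓝 0) :=
    Real.tendsto_exp_atBot.comp (tendsto_neg_atTop_atBot.comp (tendsto_id.const_mul_atTop hq))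
  have hra : Tendsto (fun r : ℝ => r ^ (-α)) atTop (𝓝 0) := tendsto_rpow_neg_atTop h0
  have hrb : Tendsto (fun r : ℝ => r ^ (1 - α)) atTop (𝓝 0) := by
    have := tendsto_rpow_neg_atTop (by linarith : (0:ℝ) < α - 1)
    simpa [show -(α - 1) = 1 - α by ring] using this
  have htop : Tendsto Φ atTop (𝓝 0) := by
    have hA : Tendsto (fun r : ℝ => -(Real.exp (-(q * r)) * r ^ (-α)) + r ^ (-α)
        - q * r ^ (1 - α) + q * (1 - Real.exp (-(q * r))) * r ^ (1 - α) / (1 - α))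
        atTop (𝓝 0) := by
      have t1 : Tendsto (fun r : ℝ => Real.exp (-(q * r)) * r ^ (-α)) atTop (𝓝 0) := by
        simpa using hexp0.mul hra
      have t3 : Tendsto (fun r : ℝ => q * r ^ (1 - α)) atTop (𝓝 0) := by
        simpa using hrb.const_mul q
      have t4 : Tendsto (fun r : ℝ => q * (1 - Real.exp (-(q * r))) * r ^ (1 - α) / (1 - α))
          atTop (𝓝 0) := by
        have tnum : Tendsto (fun r : ℝ => q * (1 - Real.exp (-(q * r))) * r ^ (1 - α))
            atTop (𝓝 0) := by
          have := (((tendsto_const_nhds : Filter.Tendsto (fun _ : ℝ => (1:ℝ)) atTop (𝓝 1)).sub hexp0).const_mul q).mul hrb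
          simpa using this
        simpa using tnum.div_const (1 - α)
      simpa using ((t1.neg.add hra).sub t3).add t4
    apply hA.congr'
    filter_upwards [eventually_gt_atTop (0:ℝ)] with r hr
    simp only [hΦ]
    rw [show r ^ (1 - α) = r * r ^ (-α) by
      rw [rpow_congr r (show (1:ℝ) - α = 1 + (-α) by ring), Real.rpow_add hr, Real.rpow_one]]
    ring
  -- value at 0
  have hΦ0 : Φ 0 = 0 := by norm_num [hΦ]
  -- continuity at 0
  have hcont : ContinuousWithinAt Φ (Set.Ici 0) 0 := by
    rw [ContinuousWithinAt, hΦ0]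
    have hr2α : Tendsto (fun r : ℝ => r ^ (2 - α)) (𝓝[Set.Ici 0] 0) (𝓝 (0:ℝ)) := by
      have := (Real.continuousAt_rpow_const 0 (2 - α) (Or.inr (by linarith))).tendsto
      rw [Real.zero_rpow (by linarith : (2:ℝ) - α ≠ 0)] at this
      exact this.mono_left nhdsWithin_le_nhds
    have hsq : ∀ r : ℝ, 0 < r → r ^ 2 * r ^ (-α) = r ^ (2 - α) := by
      intro r hr
      rw [rpow_congr r (show (2:ℝ) - α = 2 + (-α) by ring), Real.rpow_add hr,
        show ((2:ℝ)) = ((2:ℕ):ℝ) by norm_num, Real.rpow_natCast]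
    have hsq' : ∀ r : ℝ, 0 < r → r * r ^ (1 - α) = r ^ (2 - α) := by
      intro r hr
      rw [rpow_congr r (show (2:ℝ) - α = 1 + (1 - α) by ring), Real.rpow_add hr, Real.rpow_one]
    have T1 : Tendsto (fun r : ℝ => (Real.exp (-(q * r)) - 1 + q * r) * r ^ (-α))
        (𝓝[Set.Ici 0] 0) (𝓝 0) := by
      apply squeeze_zero' (g := fun r : ℝ => q ^ 2 / 2 * r ^ (2 - α))
      · filter_upwards [self_mem_nhdsWithin] with r hr
        exact mul_nonneg (hL3 (q * r)) (Real.rpow_nonneg hr _)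
      · filter_upwards [self_mem_nhdsWithin] with r hr
        rcases eq_or_lt_of_le (Set.mem_Ici.mp hr) with h | h
        · simp [← h, Real.zero_rpow (by linarith : (2:ℝ) - α ≠ 0)]
        · have hb : Real.exp (-(q * r)) - 1 + q * r ≤ (q * r) ^ 2 / 2 :=
            hL4 (by positivity)
          calc (Real.exp (-(q * r)) - 1 + q * r) * r ^ (-α)
              ≤ ((q * r) ^ 2 / 2) * r ^ (-α) :=
                mul_le_mul_of_nonneg_right hb (Real.rpow_nonneg hr _)
            _ = q ^ 2 / 2 * (r ^ 2 * r ^ (-α)) := by ring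
            _ = q ^ 2 / 2 * r ^ (2 - α) := by rw [hsq r h]
      · simpa using hr2α.const_mul (q ^ 2 / 2)
    have T2 : Tendsto (fun r : ℝ => q * (1 - Real.exp (-(q * r))) * r ^ (1 - α) / (1 - α))
        (𝓝[Set.Ici 0] 0) (𝓝 0) := by
      have tnum : Tendsto (fun r : ℝ => q * (1 - Real.exp (-(q * r))) * r ^ (1 - α))
          (𝓝[Set.Ici 0] 0) (𝓝 0) := by
        apply squeeze_zero' (g := fun r : ℝ => q ^ 2 * r ^ (2 - α))
        · filter_upwards [self_mem_nhdsWithin] with r hr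
          exact mul_nonneg (mul_nonneg hq.le (hL2 (mul_nonneg hq.le hr))) (Real.rpow_nonneg hr _)
        · filter_upwards [self_mem_nhdsWithin] with r hr
          rcases eq_or_lt_of_le (Set.mem_Ici.mp hr) with h | h
          · simp [← h, Real.zero_rpow (by linarith : (2:ℝ) - α ≠ 0),
              Real.zero_rpow (by linarith : (1:ℝ) - α ≠ 0)]
          · have hb : 1 - Real.exp (-(q * r)) ≤ q * r := hL1 (q * r)
            calc q * (1 - Real.exp (-(q * r))) * r ^ (1 - α)
                ≤ q * (q * r) * r ^ (1 - α) := by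
                  apply mul_le_mul_of_nonneg_right _ (Real.rpow_nonneg hr _)
                  exact mul_le_mul_of_nonneg_left hb hq.le
              _ = q ^ 2 * (r * r ^ (1 - α)) := by ring
              _ = q ^ 2 * r ^ (2 - α) := by rw [hsq' r h]
        · simpa using hr2α.const_mul (q ^ 2)
      simpa using tnum.div_const (1 - α)
    simpa [hΦ] using T1.neg.add T2
  -- integrability of f
  have hfmeas : AEStronglyMeasurable f (volume.restrict (Set.Ioi (0:ℝ))) := by
    apply Measurable.aestronglyMeasurable
    fun_prop
  have hfint : IntegrableOn f (Set.Ioi (0:ℝ)) := by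
    rw [← Set.Ioc_union_Ioi_eq_Ioi (le_of_lt one_pos), integrableOn_union]
    constructor
    · have hb : IntegrableOn (fun r : ℝ => α * q ^ 2 / 2 * r ^ (1 - α)) (Set.Ioc (0:ℝ) 1) :=
        (hL6 (by linarith)).const_mul (α * q ^ 2 / 2)
      apply MeasureTheory.Integrable.mono hb (hfmeas.mono_set Set.Ioc_subset_Ioi_self)
      rw [ae_restrict_iff' measurableSet_Ioc]
      filter_upwards with r hr
      obtain ⟨hr0, _⟩ := hr
      have hx0 : (0:ℝ) ≤ q * r := by positivity
      have hb1 : |Real.exp (-(q * r)) - 1 + q * r| ≤ (q * r) ^ 2 / 2 := by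
        rw [abs_of_nonneg (hL3 (q * r))]; exact hL4 hx0
      have hrw : r ^ 2 * r ^ (-α - 1) = r ^ (1 - α) := by
        rw [rpow_congr r (show (1:ℝ) - α = 2 + (-α - 1) by ring), Real.rpow_add hr0,
          show ((2:ℝ)) = ((2:ℕ):ℝ) by norm_num, Real.rpow_natCast]
      rw [Real.norm_eq_abs, Real.norm_eq_abs, abs_mul,
        abs_of_nonneg (by positivity : (0:ℝ) ≤ α * r ^ (-α - 1)),
        abs_of_nonneg (by positivity : (0:ℝ) ≤ α * q ^ 2 / 2 * r ^ (1 - α))]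
      calc |Real.exp (-(q * r)) - 1 + q * r| * (α * r ^ (-α - 1))
          ≤ ((q * r) ^ 2 / 2) * (α * r ^ (-α - 1)) :=
            mul_le_mul_of_nonneg_right hb1 (by positivity)
        _ = α * q ^ 2 / 2 * (r ^ 2 * r ^ (-α - 1)) := by ring
        _ = α * q ^ 2 / 2 * r ^ (1 - α) := by rw [hrw]
    · have hb : IntegrableOn (fun r : ℝ => α * q * r ^ (-α)) (Set.Ioi (1:ℝ)) :=
        (integrableOn_Ioi_rpow_of_lt (by linarith) one_pos).const_mul (α * q)
      apply MeasureTheory.Integrable.mono hb (hfmeas.mono_set (Set.Ioi_subset_Ioi one_pos.le))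
      rw [ae_restrict_iff' measurableSet_Ioi]
      filter_upwards with r hr
      rw [Set.mem_Ioi] at hr
      have hr0 : (0:ℝ) < r := lt_trans one_pos hr
      have hb1 : |Real.exp (-(q * r)) - 1 + q * r| ≤ q * r := by
        rw [abs_of_nonneg (hL3 (q * r))]
        have := hL2 (le_of_lt (by positivity : (0:ℝ) < q * r))
        linarith
      have hrw : r * r ^ (-α - 1) = r ^ (-α) := by
        rw [rpow_congr r (show -α = 1 + (-α - 1) by ring), Real.rpow_add hr0,
          Real.rpow_one]
      rw [Real.norm_eq_abs, Real.norm_eq_abs, abs_mul,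
        abs_of_nonneg (by positivity : (0:ℝ) ≤ α * r ^ (-α - 1)),
        abs_of_nonneg (by positivity : (0:ℝ) ≤ α * q * r ^ (-α))]
      calc |Real.exp (-(q * r)) - 1 + q * r| * (α * r ^ (-α - 1))
          ≤ (q * r) * (α * r ^ (-α - 1)) := mul_le_mul_of_nonneg_right hb1 (by positivity)
        _ = α * q * (r * r ^ (-α - 1)) := by ring
        _ = α * q * r ^ (-α) := by rw [hrw]
  -- integrability of g
  have hgint : IntegrableOn g (Set.Ioi (0:ℝ)) := by
    have := (hL5 (by linarith : (0:ℝ) < 2 - α) hq).const_mul (q ^ 2 / (1 - α))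
    apply (integrableOn_congr_fun ?_ measurableSet_Ioi).mpr this
    intro t ht
    simp only [hg, show (2:ℝ) - α - 1 = 1 - α by ring]
    ring
  -- FTC
  have key := integral_Ioi_of_hasDerivAt_of_tendsto hcont hderiv (hfint.add hgint) htop
  rw [integral_add hfint hgint, hΦ0, zero_sub, neg_zero] at key
  have hfg : ∫ r in Set.Ioi (0:ℝ), f r = -∫ r in Set.Ioi (0:ℝ), g r := by linarith
  have hgval : ∫ r in Set.Ioi (0:ℝ), g r
      = q ^ 2 / (1 - α) * ((1 / q) ^ (2 - α) * Real.Gamma (2 - α)) := by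
    rw [show (∫ r in Set.Ioi (0:ℝ), g r)
        = ∫ r in Set.Ioi (0:ℝ), q ^ 2 / (1 - α) * (r ^ ((2 - α) - 1) * Real.exp (-(q * r))) from
      setIntegral_congr_fun measurableSet_Ioi (by
        intro t ht
        simp only [hg, show (2:ℝ) - α - 1 = 1 - α by ring]
        ring)]
    rw [integral_const_mul, integral_rpow_mul_exp_neg_mul_Ioi (by linarith) hq]
  rw [hfg, hgval]
  have hGamma : Real.Gamma (2 - α) = (1 - α) * Real.Gamma (1 - α) := by
    rw [show (2:ℝ) - α = (1 - α) + 1 by ring, Real.Gamma_add_one hne]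
  have harith : q ^ 2 * (1 / q) ^ (2 - α) = q ^ α := by
    rw [one_div, ← Real.rpow_neg_one q, ← Real.rpow_mul hq.le, ← Real.rpow_natCast q 2,
      ← Real.rpow_add hq]
    congr 1; push_cast; ring
  rw [hGamma]
  calc -(q ^ 2 / (1 - α) * ((1 / q) ^ (2 - α) * ((1 - α) * Real.Gamma (1 - α))))
      = -((q ^ 2 * (1 / q) ^ (2 - α)) * Real.Gamma (1 - α)) := by field_simp
    _ = -Real.Gamma (1 - α) * q ^ α := by rw [harith]; ring


lemma case1 (α : ℝ) (h0 : 0 < α) (h1 : α < 1) (q : ℝ) (hq : 0 < q) :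
    ∫ r in Set.Ioi (0 : ℝ),
        (Real.exp (-(q * r)) - 1) * (α * r ^ (-α - 1))
      = -Real.Gamma (1 - α) * q ^ α := by
  set f : ℝ → ℝ := fun r => (Real.exp (-(q * r)) - 1) * (α * r ^ (-α - 1)) with hf
  set g : ℝ → ℝ := fun r => q * Real.exp (-(q * r)) * r ^ (-α) with hg
  set Φ : ℝ → ℝ := fun r => (1 - Real.exp (-(q * r))) * r ^ (-α) with hΦ
  -- derivative
  have hderiv : ∀ x ∈ Set.Ioi (0:ℝ), HasDerivAt Φ (f x + g x) x := by
    intro x hx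
    rw [Set.mem_Ioi] at hx
    have hexp : HasDerivAt (fun r : ℝ => Real.exp (-(q * r))) (-q * Real.exp (-(q * x))) x := by
      have h1 : HasDerivAt (fun r : ℝ => -(q * r)) (-q) x := by
        simpa [Pi.neg_def] using ((hasDerivAt_id x).const_mul q).neg
      simpa [mul_comm] using h1.exp
    have hu : HasDerivAt (fun r : ℝ => 1 - Real.exp (-(q * r))) (q * Real.exp (-(q * x))) x := by
      simpa using (hexp.const_sub 1)
    have hv : HasDerivAt (fun r : ℝ => r ^ (-α)) (-α * x ^ (-α - 1)) x :=
      Real.hasDerivAt_rpow_const (Or.inl (ne_of_gt hx))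
    have := hu.mul hv
    refine this.congr_deriv ?_
    simp only [hf, hg]
    ring
  -- limit at infinity
  have hexp0 : Tendsto (fun r : ℝ => Real.exp (-(q * r))) atTop (𝓝 0) :=
    Real.tendsto_exp_atBot.comp (tendsto_neg_atTop_atBot.comp (tendsto_id.const_mul_atTop hq))
  have htop : Tendsto Φ atTop (𝓝 0) := by
    have h1 : Tendsto (fun r : ℝ => 1 - Real.exp (-(q * r))) atTop (𝓝 1) := by
      simpa using (tendsto_const_nhds.sub hexp0)
    simpa using h1.mul (tendsto_rpow_neg_atTop h0)
  -- continuity at 0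
  have hΦ0 : Φ 0 = 0 := by simp [hΦ]
  have hcont : ContinuousWithinAt Φ (Set.Ici 0) 0 := by
    rw [ContinuousWithinAt, hΦ0]
    apply squeeze_zero' (g := fun r : ℝ => q * r ^ (1 - α))
    · filter_upwards [self_mem_nhdsWithin] with r hr
      exact mul_nonneg (hL2 (mul_nonneg hq.le hr)) (Real.rpow_nonneg hr _)
    · filter_upwards [self_mem_nhdsWithin] with r hr
      rcases eq_or_lt_of_le (Set.mem_Ici.mp hr) with h | h
      · simp [hΦ, ← h, Real.zero_rpow (by linarith : (1:ℝ) - α ≠ 0)]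
      · have hb : (1 : ℝ) - Real.exp (-(q * r)) ≤ q * r := hL1 (q * r)
        have hrw : r ^ (1 - α) = r * r ^ (-α) := by
          rw [show (1 : ℝ) - α = 1 + (-α) by ring, Real.rpow_add h, Real.rpow_one]
        calc Φ r ≤ (q * r) * r ^ (-α) :=
              mul_le_mul_of_nonneg_right hb (Real.rpow_nonneg hr _)
          _ = q * r ^ (1 - α) := by rw [hrw]; ring
    · have hc : Tendsto (fun r : ℝ => r ^ (1 - α)) (𝓝 0) (𝓝 (0:ℝ)) := by
        have := (Real.continuousAt_rpow_const 0 (1 - α) (Or.inr (by linarith))).tendsto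
        rwa [Real.zero_rpow (by linarith : (1:ℝ) - α ≠ 0)] at this
      simpa using ((hc.mono_left nhdsWithin_le_nhds).const_mul q)
  -- integrability of f
  have hfmeas : AEStronglyMeasurable f (volume.restrict (Set.Ioi (0:ℝ))) := by
    apply Measurable.aestronglyMeasurable
    fun_prop
  have hfint : IntegrableOn f (Set.Ioi (0:ℝ)) := by
    rw [← Set.Ioc_union_Ioi_eq_Ioi (le_of_lt one_pos), integrableOn_union]
    constructor
    · have hb : IntegrableOn (fun r : ℝ => α * q * r ^ (-α)) (Set.Ioc (0:ℝ) 1) :=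
        (hL6 (by linarith)).const_mul (α * q)
      apply MeasureTheory.Integrable.mono hb (hfmeas.mono_set (Set.Ioc_subset_Ioi_self))
      rw [ae_restrict_iff' measurableSet_Ioc]
      filter_upwards with r hr
      obtain ⟨hr0, _⟩ := hr
      have h1 : |Real.exp (-(q * r)) - 1| ≤ q * r := by
        rw [abs_of_nonpos (by have := hL2 (le_of_lt (by positivity : (0:ℝ) < q * r)); linarith)]
        have := hL1 (q * r); linarith
      have hrw : r ^ (-α) = r * r ^ (-α - 1) := by
        rw [show r ^ (-α) = r ^ (1 + (-α - 1)) by congr 1; ring, Real.rpow_add hr0,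
          Real.rpow_one]
      rw [Real.norm_eq_abs, Real.norm_eq_abs, abs_mul]
      have h2 : |α * r ^ (-α - 1)| = α * r ^ (-α - 1) :=
        abs_of_nonneg (by positivity)
      rw [h2, abs_of_nonneg (by positivity : (0:ℝ) ≤ α * q * r ^ (-α)), hrw]
      calc |Real.exp (-(q * r)) - 1| * (α * r ^ (-α - 1))
          ≤ (q * r) * (α * r ^ (-α - 1)) :=
            mul_le_mul_of_nonneg_right h1 (by positivity)
        _ = α * q * (r * r ^ (-α - 1)) := by ring
    · have hb : IntegrableOn (fun r : ℝ => α * r ^ (-α - 1)) (Set.Ioi (1:ℝ)) :=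
        (integrableOn_Ioi_rpow_of_lt (by linarith) one_pos).const_mul α
      apply MeasureTheory.Integrable.mono hb (hfmeas.mono_set (Set.Ioi_subset_Ioi (le_of_lt one_pos)))
      rw [ae_restrict_iff' measurableSet_Ioi]
      filter_upwards with r hr
      rw [Set.mem_Ioi] at hr
      have hr0 : (0:ℝ) < r := lt_trans one_pos hr
      have h1 : |Real.exp (-(q * r)) - 1| ≤ 1 := by
        rw [abs_of_nonpos (by have := hL2 (le_of_lt (by positivity : (0:ℝ) < q * r)); linarith)]
        have := Real.exp_pos (-(q * r)); linarith
      rw [Real.norm_eq_abs, Real.norm_eq_abs, abs_mul]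
      have h2 : |α * r ^ (-α - 1)| = α * r ^ (-α - 1) :=
        abs_of_nonneg (by positivity)
      rw [h2]
      calc |Real.exp (-(q * r)) - 1| * (α * r ^ (-α - 1))
          ≤ 1 * (α * r ^ (-α - 1)) := mul_le_mul_of_nonneg_right h1 (by positivity)
        _ = α * r ^ (-α - 1) := one_mul _
  -- integrability of g
  have hgint : IntegrableOn g (Set.Ioi (0:ℝ)) := by
    have := (hL5 (by linarith : (0:ℝ) < 1 - α) hq).const_mul q
    apply (integrableOn_congr_fun ?_ measurableSet_Ioi).mpr this
    intro t ht
    rw [Set.mem_Ioi] at ht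
    simp only [hg, show (1:ℝ) - α - 1 = -α by ring]
    ring
  -- FTC
  have key := integral_Ioi_of_hasDerivAt_of_tendsto hcont hderiv (hfint.add hgint) htop
  rw [integral_add hfint hgint, hΦ0, zero_sub, neg_zero] at key
  have hfg : ∫ r in Set.Ioi (0:ℝ), f r = -∫ r in Set.Ioi (0:ℝ), g r := by linarith
  -- compute ∫ g
  have hgval : ∫ r in Set.Ioi (0:ℝ), g r = q * ((1 / q) ^ (1 - α) * Real.Gamma (1 - α)) := by
    rw [show (∫ r in Set.Ioi (0:ℝ), g r)
        = ∫ r in Set.Ioi (0:ℝ), q * (r ^ ((1 - α) - 1) * Real.exp (-(q * r))) from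
      setIntegral_congr_fun measurableSet_Ioi (by
        intro t ht
        rw [Set.mem_Ioi] at ht
        simp only [hg, show (1:ℝ) - α - 1 = -α by ring]
        ring)]
    rw [integral_const_mul, integral_rpow_mul_exp_neg_mul_Ioi (by linarith) hq]
  rw [hfg, hgval]
  have harith : q * (1 / q) ^ (1 - α) = q ^ α := by
    rw [one_div, ← Real.rpow_neg_one q, ← Real.rpow_mul hq.le]
    nth_rewrite 1 [← Real.rpow_one q]
    rw [← Real.rpow_add hq]
    congr 1; ring
  calc -(q * ((1 / q) ^ (1 - α) * Real.Gamma (1 - α)))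
      = -(q * (1 / q) ^ (1 - α)) * Real.Gamma (1 - α) := by ring
    _ = -Real.Gamma (1 - α) * q ^ α := by rw [harith]; ring


/-- For `α ∈ (0,1) ∪ (1,2)` and `q > 0`,
`∫_0^∞ (e^{-qr} - 1 + qr·1_{α>1}) α r^{-α-1} dr = -Γ(1-α) q^α`, where the compensating
term `qr` is present only when `α > 1` and `Γ` is the Euler Gamma function (analytically
continued). -/
theorem extremal_stable_laplace_exponent (α : ℝ)
    (hα : α ∈ Set.Ioo (0 : ℝ) 1 ∪ Set.Ioo (1 : ℝ) 2) (q : ℝ) (hq : 0 < q) :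
    ∫ r in Set.Ioi (0 : ℝ),
        (Real.exp (-(q * r)) - 1 + (if 1 < α then q * r else 0)) * (α * r ^ (-α - 1))
      = -Real.Gamma (1 - α) * q ^ α := by
  rcases hα with h | h
  · obtain ⟨h0, h1⟩ := h
    simp only [if_neg (show ¬ (1:ℝ) < α by linarith), add_zero]
    exact case1 α h0 h1 q hq
  · obtain ⟨h1, h2⟩ := h
    simp only [if_pos h1]
    exact case2 α h1 h2 q hq
end
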